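/- arXiv:1607.06213 — 7 statements merged into one kernel-verified Lean document; each statement's English description precedes it below -/
import Mathlib

section
/- Mixing Lemma: Let B be a complete Boolean algebra with Stone space X = St(B), let A ⊆ B be an antichain, and let {f_a : a ∈ A} be a family of continuous functions from X to the one-point compactification S² = ℂ ∪ {∞} with each f_a⁻¹[{∞}] nowhere dense. Then there exists such a function f with f ↾ O_a = f_a ↾ O_a for every a ∈ A. -/
/-- An ultrafilter on a Boolean algebra `B`. -/
structure BoolUltrafilter (B : Type*) [BooleanAlgebra B] where
  carrier : Set B
  top_mem : ⊤ ∈ carrier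
  bot_not_mem : ⊥ ∉ carrier
  inf_mem : ∀ a b : B, a ∈ carrier → b ∈ carrier → a ⊓ b ∈ carrier
  mem_of_le : ∀ a b : B, a ∈ carrier → a ≤ b → b ∈ carrier
  mem_or_compl_mem : ∀ a : B, a ∈ carrier ∨ aᶜ ∈ carrier

/-- The basic clopen set `O_b` of the Stone space of `B`. -/
def basicOpen {B : Type*} [BooleanAlgebra B] (b : B) : Set (BoolUltrafilter B) :=
  {G | b ∈ G.carrier}

/-- The Stone topology, generated by the basic clopen sets. -/
instance stoneTopology (B : Type*) [BooleanAlgebra B] :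
    TopologicalSpace (BoolUltrafilter B) :=
  TopologicalSpace.generateFrom {S | ∃ b : B, S = basicOpen b}

namespace StoneAux

variable {B : Type*} [BooleanAlgebra B]

lemma isOpen_basicOpen (b : B) : IsOpen (basicOpen b) :=
  TopologicalSpace.isOpen_generateFrom_of_mem ⟨b, rfl⟩

lemma mem_basicOpen {b : B} {G : BoolUltrafilter B} : G ∈ basicOpen b ↔ b ∈ G.carrier :=
  Iff.rfl

lemma basicOpen_inter (a b : B) : basicOpen a ∩ basicOpen b = basicOpen (a ⊓ b) := by
  ext G
  constructor
  · rintro ⟨ha, hb⟩; exact G.inf_mem a b ha hb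
  · intro h; exact ⟨G.mem_of_le _ _ h inf_le_left, G.mem_of_le _ _ h inf_le_right⟩

lemma basicOpen_bot : basicOpen (⊥ : B) = ∅ := by
  ext G; simp [basicOpen, G.bot_not_mem]

lemma basicOpen_mono {a b : B} (h : a ≤ b) : basicOpen a ⊆ basicOpen b :=
  fun G hG => G.mem_of_le _ _ hG h

lemma compl_basicOpen (a : B) : (basicOpen a)ᶜ = basicOpen aᶜ := by
  ext G
  simp only [Set.mem_compl_iff, mem_basicOpen]
  constructor
  · intro h; rcases G.mem_or_compl_mem a with h' | h'
    · exact absurd h' h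
    · exact h'
  · intro h ha
    exact G.bot_not_mem (by simpa using G.inf_mem a aᶜ ha h)

lemma isClosed_basicOpen (b : B) : IsClosed (basicOpen b) := by
  rw [← isOpen_compl_iff, compl_basicOpen]
  exact isOpen_basicOpen _

lemma ne_bot_of_mem {b : B} {G : BoolUltrafilter B} (h : b ∈ G.carrier) : b ≠ ⊥ := by
  rintro rfl; exact G.bot_not_mem h

/-- Every open set contains a basic neighborhood of each of its points. -/
lemma exists_basic_subset' {U : Set (BoolUltrafilter B)} (hU : IsOpen U) :
    ∀ G ∈ U, ∃ b : B, b ∈ G.carrier ∧ basicOpen b ⊆ U := by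
  have hU' : TopologicalSpace.GenerateOpen {S | ∃ b : B, S = basicOpen b} U := hU
  clear hU
  induction hU' with
  | basic s hs =>
      obtain ⟨b, rfl⟩ := hs
      exact fun G hG => ⟨b, hG, subset_rfl⟩
  | univ => exact fun G _ => ⟨⊤, G.top_mem, Set.subset_univ _⟩
  | inter s t _ _ ihs iht =>
      intro G hG
      obtain ⟨b, hb, hbs⟩ := ihs G hG.1
      obtain ⟨c, hc, hct⟩ := iht G hG.2
      refine ⟨b ⊓ c, G.inf_mem _ _ hb hc, ?_⟩
      rw [← basicOpen_inter]
      exact Set.subset_inter_iff.mpr ⟨(Set.inter_subset_left).trans hbs,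
        (Set.inter_subset_right).trans hct⟩
  | sUnion S _ ih =>
      rintro G ⟨s, hsS, hGs⟩
      obtain ⟨b, hb, hbs⟩ := ih s hsS G hGs
      exact ⟨b, hb, hbs.trans (Set.subset_sUnion_of_mem hsS)⟩

lemma exists_basic_subset {U : Set (BoolUltrafilter B)} (hU : IsOpen U)
    {G : BoolUltrafilter B} (hG : G ∈ U) :
    ∃ b : B, b ∈ G.carrier ∧ basicOpen b ⊆ U :=
  exists_basic_subset' hU G hG

/-- Membership in closures can be tested on basic opens. -/
lemma mem_closure_iff_basic {U : Set (BoolUltrafilter B)} {G : BoolUltrafilter B} :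
    G ∈ closure U ↔ ∀ b ∈ G.carrier, (basicOpen b ∩ U).Nonempty := by
  rw [mem_closure_iff]
  constructor
  · intro h b hb
    exact h _ (isOpen_basicOpen b) hb
  · intro h o ho hGo
    obtain ⟨b, hb, hbo⟩ := exists_basic_subset ho hGo
    obtain ⟨H, hH1, hH2⟩ := h b hb
    exact ⟨H, hbo hH1, hH2⟩

/-- Boolean prime ideal theorem: every nonzero element lies in an ultrafilter. -/
lemma exists_ultrafilter {b : B} (hb : b ≠ ⊥) : ∃ G : BoolUltrafilter B, b ∈ G.carrier := by
  classical
  set S : Set (Set B) := {F | b ∈ F ∧ ⊥ ∉ F ∧ (∀ x ∈ F, ∀ y ∈ F, x ⊓ y ∈ F) ∧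
      (∀ x ∈ F, ∀ y, x ≤ y → y ∈ F)} with hS
  have hbase : {x : B | b ≤ x} ∈ S := by
    refine ⟨le_refl b, ?_, ?_, ?_⟩
    · intro h; exact hb (le_bot_iff.mp h)
    · intro x hx y hy; exact le_inf hx hy
    · intro x hx y hxy; exact hx.trans hxy
  have hzorn : ∀ c ⊆ S, IsChain (fun x1 x2 => x1 ⊆ x2) c → c.Nonempty →
      ∃ ub ∈ S, ∀ s ∈ c, s ⊆ ub := by
    intro c hcS hchain hcne
    refine ⟨⋃₀ c, ⟨?_, ?_, ?_, ?_⟩, fun s hs => Set.subset_sUnion_of_mem hs⟩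
    · obtain ⟨F₀, hF₀⟩ := hcne
      exact ⟨F₀, hF₀, (hcS hF₀).1⟩
    · rintro ⟨F₀, hF₀, hbot⟩
      exact (hcS hF₀).2.1 hbot
    · rintro x ⟨F₁, hF₁, hx⟩ y ⟨F₂, hF₂, hy⟩
      rcases hchain.total hF₁ hF₂ with h | h
      · exact ⟨F₂, hF₂, (hcS hF₂).2.2.1 x (h hx) y hy⟩
      · exact ⟨F₁, hF₁, (hcS hF₁).2.2.1 x hx y (h hy)⟩
    · rintro x ⟨F₁, hF₁, hx⟩ y hxy
      exact ⟨F₁, hF₁, (hcS hF₁).2.2.2 x hx y hxy⟩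
  obtain ⟨F, _, hFmax⟩ := zorn_subset_nonempty S hzorn _ hbase
  obtain ⟨hbF, hbotF, hinfF, hupF⟩ := hFmax.1
  have hmax : ∀ F' ∈ S, F ⊆ F' → F' ⊆ F := fun F' h1 h2 => hFmax.2 h1 h2
  -- maximality gives the ultrafilter property
  have hult : ∀ a : B, a ∈ F ∨ aᶜ ∈ F := by
    intro a
    by_cases ha : a ∈ F
    · exact Or.inl ha
    right
    set F' : Set B := {y | ∃ x ∈ F, x ⊓ aᶜ ≤ y} with hF'
    have hFF' : F ⊆ F' := fun x hx => ⟨x, hx, inf_le_left⟩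
    have hF'S : F' ∈ S := by
      refine ⟨hFF' hbF, ?_, ?_, ?_⟩
      · rintro ⟨x, hx, hxbot⟩
        have hxa : x ≤ a := by
          have : x = (x ⊓ a) ⊔ (x ⊓ aᶜ) := by
            rw [← inf_sup_left, sup_compl_eq_top, inf_top_eq]
          rw [le_bot_iff.mp hxbot, sup_bot_eq] at this
          rw [this]; exact inf_le_right
        exact ha (hupF x hx a hxa)
      · rintro y ⟨x, hx, hxy⟩ y' ⟨x', hx', hxy'⟩
        refine ⟨x ⊓ x', hinfF x hx x' hx', ?_⟩
        calc x ⊓ x' ⊓ aᶜ ≤ (x ⊓ aᶜ) ⊓ (x' ⊓ aᶜ) := by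
              refine le_inf (inf_le_inf_right _ inf_le_left) ?_
              exact inf_le_inf_right _ inf_le_right
          _ ≤ y ⊓ y' := inf_le_inf hxy hxy'
      · rintro y ⟨x, hx, hxy⟩ y' hyy'
        exact ⟨x, hx, hxy.trans hyy'⟩
    have : F' ⊆ F := hmax F' hF'S hFF'
    exact this ⟨b, hbF, inf_le_right⟩
  exact ⟨⟨F, hupF b hbF ⊤ le_top, hbotF, fun x y hx hy => hinfF x hx y hy,
    fun x y hx => hupF x hx y, hult⟩, hbF⟩

lemma basicOpen_nonempty {b : B} (hb : b ≠ ⊥) : (basicOpen b).Nonempty :=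
  exists_ultrafilter hb

end StoneAux

section CompleteStone
namespace StoneAux
variable {B : Type*} [CompleteBooleanAlgebra B]

lemma closure_open_eq {U : Set (BoolUltrafilter B)} (hU : IsOpen U) :
    closure U = basicOpen (sSup {b : B | basicOpen b ⊆ U}) := by
  set T := {b : B | basicOpen b ⊆ U} with hT
  apply Set.Subset.antisymm
  · have hUc : U ⊆ basicOpen (sSup T) := by
      intro G hG
      obtain ⟨b, hb, hbU⟩ := exists_basic_subset hU hG
      exact basicOpen_mono (le_sSup (show b ∈ T from hbU)) hb
    exact closure_minimal hUc (isClosed_basicOpen _)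
  · intro G hG
    rw [mem_closure_iff_basic]
    intro e he
    have hec : e ⊓ sSup T ∈ G.carrier := G.inf_mem _ _ he hG
    have hne : e ⊓ sSup T ≠ ⊥ := ne_bot_of_mem hec
    have heq : e ⊓ sSup T = ⨆ b ∈ T, e ⊓ b := inf_sSup_eq
    have hex : ∃ b ∈ T, e ⊓ b ≠ ⊥ := by
      by_contra hcon
      push_neg at hcon
      exact hne (by rw [heq]; simpa using hcon)
    obtain ⟨b, hbT, hbne⟩ := hex
    obtain ⟨H, hH⟩ := exists_ultrafilter hbne
    exact ⟨H, H.mem_of_le _ _ hH inf_le_left, hbT (H.mem_of_le _ _ hH inf_le_right)⟩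

lemma isOpen_closure_of_isOpen {U : Set (BoolUltrafilter B)} (hU : IsOpen U) :
    IsOpen (closure U) := by
  rw [closure_open_eq hU]; exact isOpen_basicOpen _

end StoneAux
end CompleteStone

open StoneAux in
open OnePoint in
/-- Mixing Lemma: given an antichain `A` in a complete Boolean algebra `B` and a family
of functions `f a ∈ C⁺(St(B))` for `a ∈ A`, there is a single `f ∈ C⁺(St(B))` with
`f ↾ O_a = f_a ↾ O_a` for every `a ∈ A`. -/
theorem mixing_lemma
    {B : Type*} [CompleteBooleanAlgebra B] (A : Set B)
    (hanti : A.Pairwise fun a b => a ⊓ b = ⊥)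
    (f : B → BoolUltrafilter B → OnePoint ℂ)
    (hf : ∀ a ∈ A, Continuous (f a) ∧ IsNowhereDense ((f a) ⁻¹' {(∞ : OnePoint ℂ)})) :
    ∃ g : BoolUltrafilter B → OnePoint ℂ,
      Continuous g ∧ IsNowhereDense (g ⁻¹' {(∞ : OnePoint ℂ)}) ∧
      ∀ a ∈ A, ∀ G ∈ basicOpen a, g G = f a G := by
  classical
  set s : B := sSup A with hs
  set z₀ : OnePoint ℂ := ((0 : ℂ) : OnePoint ℂ) with hz₀
  set W : Set (OnePoint ℂ) → Set (BoolUltrafilter B) :=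
    fun V => (⋃ a ∈ A, basicOpen a ∩ f a ⁻¹' V) ∪ {G | sᶜ ∈ G.carrier ∧ z₀ ∈ V} with hW
  -- membership helpers
  have hWmemL : ∀ {V : Set (OnePoint ℂ)} {a : B} {G : BoolUltrafilter B},
      a ∈ A → G ∈ basicOpen a → f a G ∈ V → G ∈ W V := by
    intro V a G ha hGa hfa
    exact Or.inl (Set.mem_biUnion ha ⟨hGa, hfa⟩)
  have hWmemR : ∀ {V : Set (OnePoint ℂ)} {G : BoolUltrafilter B},
      sᶜ ∈ G.carrier → z₀ ∈ V → G ∈ W V := by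
    intro V G hGs h0
    exact Or.inr ⟨hGs, h0⟩
  have hle : ∀ a ∈ A, a ≤ s := fun a ha => le_sSup ha
  -- W V is open for open V
  have hWopen : ∀ V : Set (OnePoint ℂ), IsOpen V → IsOpen (W V) := by
    intro V hV
    apply IsOpen.union
    · exact isOpen_biUnion fun a ha =>
        (isOpen_basicOpen a).inter (((hf a ha).1).isOpen_preimage V hV)
    · by_cases h0 : z₀ ∈ V
      · have : {G : BoolUltrafilter B | sᶜ ∈ G.carrier ∧ z₀ ∈ V} = basicOpen sᶜ := by
          ext G; simp [h0, basicOpen]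
        rw [this]; exact isOpen_basicOpen _
      · have : {G : BoolUltrafilter B | sᶜ ∈ G.carrier ∧ z₀ ∈ V} = ∅ := by
          ext G; simp [h0]
        rw [this]; exact isOpen_empty
  -- disjointness
  have hWdisj : ∀ V V' : Set (OnePoint ℂ), V ∩ V' = ∅ → W V ∩ W V' = ∅ := by
    intro V V' hVV'
    rw [Set.eq_empty_iff_forall_notMem]
    rintro G ⟨hG1, hG2⟩
    rcases hG1 with hG1 | hG1 <;> rcases hG2 with hG2 | hG2
    · obtain ⟨a, ha, hGa, hfa⟩ := Set.mem_iUnion₂.mp hG1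
      obtain ⟨a', ha', hGa', hfa'⟩ := Set.mem_iUnion₂.mp hG2
      by_cases hne : a = a'
      · subst hne
        have : f a G ∈ V ∩ V' := ⟨hfa, hfa'⟩
        rw [hVV'] at this; exact this
      · have hbot : a ⊓ a' = ⊥ := hanti ha ha' hne
        have := G.inf_mem a a' hGa hGa'
        rw [hbot] at this
        exact G.bot_not_mem this
    · obtain ⟨a, ha, hGa, _⟩ := Set.mem_iUnion₂.mp hG1
      have hbot : a ⊓ sᶜ = ⊥ := by
        have : a ⊓ sᶜ ≤ s ⊓ sᶜ := inf_le_inf_right _ (hle a ha)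
        simpa using le_bot_iff.mp (by simpa using this)
      have := G.inf_mem a sᶜ hGa hG2.1
      rw [hbot] at this
      exact G.bot_not_mem this
    · obtain ⟨a, ha, hGa, _⟩ := Set.mem_iUnion₂.mp hG2
      have hbot : a ⊓ sᶜ = ⊥ := by
        have : a ⊓ sᶜ ≤ s ⊓ sᶜ := inf_le_inf_right _ (hle a ha)
        simpa using le_bot_iff.mp (by simpa using this)
      have := G.inf_mem a sᶜ hGa hG1.1
      rw [hbot] at this
      exact G.bot_not_mem this
    · have : z₀ ∈ V ∩ V' := ⟨hG1.2, hG2.2⟩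
      rw [hVV'] at this; exact this
  -- disjointness of closures
  have hclos : ∀ V V' : Set (OnePoint ℂ), IsOpen V → IsOpen V' → V ∩ V' = ∅ →
      closure (W V) ∩ closure (W V') = ∅ := by
    intro V V' hV hV' hVV'
    have step : W V' ⊆ (closure (W V))ᶜ := by
      intro G hG hGc
      obtain ⟨H, hH1, hH2⟩ := (mem_closure_iff.mp hGc) (W V') (hWopen V' hV') hG
      have : H ∈ W V ∩ W V' := ⟨hH2, hH1⟩
      rw [hWdisj V V' hVV'] at this; exact this
    have : closure (W V') ⊆ (closure (W V))ᶜ :=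
      closure_minimal step (isOpen_compl_iff.mp (by
        simpa using isOpen_closure_of_isOpen (hWopen V hV)))
    rw [Set.eq_empty_iff_forall_notMem]
    rintro G ⟨hG1, hG2⟩
    exact (this hG2) hG1
  -- the defining property
  set P : BoolUltrafilter B → OnePoint ℂ → Prop :=
    fun G z => ∀ V : Set (OnePoint ℂ), IsOpen V → z ∈ V → G ∈ closure (W V) with hP
  have huniq : ∀ (G : BoolUltrafilter B) (z z' : OnePoint ℂ), P G z → P G z' → z = z' := by
    intro G z z' hz hz'
    by_contra hne
    obtain ⟨U, V, hU, hV, hzU, hz'V, hUV⟩ := t2_separation hne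
    have h1 := hz U hU hzU
    have h2 := hz' V hV hz'V
    have : G ∈ closure (W U) ∩ closure (W V) := ⟨h1, h2⟩
    rw [hclos U V hU hV (Set.disjoint_iff_inter_eq_empty.mp hUV)] at this
    exact this
  -- splitting lemma inside A
  have hsplit : ∀ e : B, e ≠ ⊥ → e ⊓ sᶜ = ⊥ → ∃ a ∈ A, e ⊓ a ≠ ⊥ := by
    intro e he h1
    have he' : e = e ⊓ s := by
      have : e = (e ⊓ s) ⊔ (e ⊓ sᶜ) := by
        rw [← inf_sup_left, sup_compl_eq_top, inf_top_eq]
      rw [h1, sup_bot_eq] at this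
      exact this
    have heq : e ⊓ s = ⨆ a ∈ A, e ⊓ a := inf_sSup_eq
    by_contra hcon
    push_neg at hcon
    apply he
    rw [he', heq]
    simpa using hcon
  -- density of W univ
  have hdense : ∀ G : BoolUltrafilter B, G ∈ closure (W Set.univ) := by
    intro G
    rw [mem_closure_iff_basic]
    intro e he
    have hene : e ≠ ⊥ := ne_bot_of_mem he
    by_cases h1 : e ⊓ sᶜ = ⊥
    · obtain ⟨a, ha, hea⟩ := hsplit e hene h1
      obtain ⟨H, hH⟩ := exists_ultrafilter hea
      exact ⟨H, H.mem_of_le _ _ hH inf_le_left,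
        hWmemL ha (H.mem_of_le _ _ hH inf_le_right) (Set.mem_univ _)⟩
    · obtain ⟨H, hH⟩ := exists_ultrafilter h1
      exact ⟨H, H.mem_of_le _ _ hH inf_le_left,
        hWmemR (H.mem_of_le _ _ hH inf_le_right) (Set.mem_univ _)⟩
  -- existence of the value
  have hex : ∀ G : BoolUltrafilter B, ∃ z, P G z := by
    intro G
    by_contra hcon
    push_neg at hcon
    simp only [hP, not_forall] at hcon
    choose V hVopen hVmem hVnc using fun z => hcon z
    obtain ⟨t, ht⟩ := isCompact_univ.elim_finite_subcover V hVopen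
      (fun z _ => Set.mem_iUnion.mpr ⟨z, hVmem z⟩)
    have hsub : W Set.univ ⊆ ⋃ z ∈ t, W (V z) := by
      rintro H (hH | hH)
      · obtain ⟨a, ha, hHa, _⟩ := Set.mem_iUnion₂.mp hH
        obtain ⟨z, hzt, hz⟩ := Set.mem_iUnion₂.mp (ht (Set.mem_univ (f a H)))
        exact Set.mem_biUnion hzt (hWmemL ha hHa hz)
      · obtain ⟨z, hzt, hz⟩ := Set.mem_iUnion₂.mp (ht (Set.mem_univ z₀))
        exact Set.mem_biUnion hzt (hWmemR hH.1 hz)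
    have : G ∈ ⋃ z ∈ (t : Set (OnePoint ℂ)), closure (W (V z)) := by
      rw [← t.finite_toSet.closure_biUnion]
      exact closure_mono hsub (hdense G)
    obtain ⟨z, hzt, hz⟩ := Set.mem_iUnion₂.mp this
    exact hVnc z hz
  -- define g
  set g : BoolUltrafilter B → OnePoint ℂ := fun G => Classical.choose (hex G) with hg
  have hgP : ∀ G, P G (g G) := fun G => Classical.choose_spec (hex G)
  -- g agrees with f a on basicOpen a
  have hagree : ∀ a ∈ A, ∀ G ∈ basicOpen a, g G = f a G := by
    intro a ha G hGa
    refine huniq G _ _ (hgP G) ?_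
    intro V hV hfa
    exact subset_closure (hWmemL ha hGa hfa)
  -- g is z₀ on basicOpen sᶜ
  have hzero : ∀ G : BoolUltrafilter B, sᶜ ∈ G.carrier → g G = z₀ := by
    intro G hGs
    refine huniq G _ _ (hgP G) ?_
    intro V hV h0
    exact subset_closure (hWmemR hGs h0)
  -- continuity
  have hcont : Continuous g := by
    rw [continuous_iff_continuousAt]
    intro G
    rw [ContinuousAt, Filter.tendsto_def]
    intro N hN
    obtain ⟨U, hUnhds, hUclosed, hUN⟩ := exists_mem_nhds_isClosed_subset hN
    set V' : Set (OnePoint ℂ) := interior U with hV'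
    have hzV' : g G ∈ V' := mem_interior_iff_mem_nhds.mpr hUnhds
    have hclV' : closure V' ⊆ N :=
      (closure_minimal interior_subset hUclosed).trans hUN
    have hGc : G ∈ closure (W V') := hgP G V' isOpen_interior hzV'
    have hopen : IsOpen (closure (W V')) :=
      isOpen_closure_of_isOpen (hWopen V' isOpen_interior)
    have hsub : closure (W V') ⊆ g ⁻¹' N := by
      intro H hH
      have : g H ∈ closure V' := by
        by_contra hgH
        have hH' : H ∈ closure (W (closure V')ᶜ) :=
          hgP H _ (isClosed_closure).isOpen_compl hgH
        have hdisj : V' ∩ (closure V')ᶜ = ∅ := by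
          rw [Set.eq_empty_iff_forall_notMem]
          rintro x ⟨hx1, hx2⟩
          exact hx2 (subset_closure hx1)
        have : H ∈ closure (W V') ∩ closure (W (closure V')ᶜ) := ⟨hH, hH'⟩
        rw [hclos V' (closure V')ᶜ isOpen_interior (isClosed_closure).isOpen_compl hdisj] at this
        exact this
      exact hclV' this
    exact Filter.mem_of_superset (hopen.mem_nhds hGc) hsub
  -- nowhere density of g ⁻¹' {∞}
  have hnwd : IsNowhereDense (g ⁻¹' {(∞ : OnePoint ℂ)}) := by
    rw [IsNowhereDense, Set.eq_empty_iff_forall_notMem]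
    intro G hG
    obtain ⟨b, hb, hbsub⟩ := exists_basic_subset isOpen_interior hG
    have hbne : b ≠ ⊥ := ne_bot_of_mem hb
    have hbsub' : basicOpen b ⊆ closure (g ⁻¹' {(∞ : OnePoint ℂ)}) :=
      hbsub.trans interior_subset
    by_cases h1 : b ⊓ sᶜ = ⊥
    · obtain ⟨a, ha, hba⟩ := hsplit b hbne h1
      have hfclosed : IsClosed (f a ⁻¹' {(∞ : OnePoint ℂ)}) :=
        IsClosed.preimage (hf a ha).1 isClosed_singleton
      have hfint : interior (f a ⁻¹' {(∞ : OnePoint ℂ)}) = ∅ := by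
        have := (hf a ha).2
        rwa [IsNowhereDense, hfclosed.closure_eq] at this
      have hnotsub : ¬ basicOpen (b ⊓ a) ⊆ f a ⁻¹' {(∞ : OnePoint ℂ)} := by
        intro hsub2
        have : basicOpen (b ⊓ a) ⊆ interior (f a ⁻¹' {(∞ : OnePoint ℂ)}) :=
          (isOpen_basicOpen _).subset_interior_iff.mpr hsub2
        rw [hfint] at this
        obtain ⟨H, hH⟩ := basicOpen_nonempty hba
        exact this hH
      obtain ⟨H, hHmem, hHne⟩ := Set.not_subset.mp hnotsub
      have hOopen : IsOpen (basicOpen (b ⊓ a) ∩ (f a ⁻¹' {(∞ : OnePoint ℂ)})ᶜ) :=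
        (isOpen_basicOpen _).inter hfclosed.isOpen_compl
      have hHb : H ∈ closure (g ⁻¹' {(∞ : OnePoint ℂ)}) :=
        hbsub' (basicOpen_mono inf_le_left hHmem)
      obtain ⟨K, hK1, hK2⟩ := (mem_closure_iff.mp hHb) _ hOopen ⟨hHmem, hHne⟩
      have hKa : K ∈ basicOpen a := basicOpen_mono inf_le_right hK1.1
      have : g K = f a K := hagree a ha K hKa
      rw [Set.mem_preimage, Set.mem_singleton_iff] at hK2
      rw [hK2] at this
      exact hK1.2 (by rw [Set.mem_preimage, Set.mem_singleton_iff, ← this])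
    · have hOopen : IsOpen (basicOpen (b ⊓ sᶜ)) := isOpen_basicOpen _
      obtain ⟨H, hH⟩ := basicOpen_nonempty h1
      have hHb : H ∈ closure (g ⁻¹' {(∞ : OnePoint ℂ)}) :=
        hbsub' (basicOpen_mono inf_le_left hH)
      obtain ⟨K, hK1, hK2⟩ := (mem_closure_iff.mp hHb) _ hOopen hH
      have : g K = z₀ := hzero K (basicOpen_mono inf_le_right hK1)
      rw [Set.mem_preimage, Set.mem_singleton_iff] at hK2
      rw [hK2, hz₀] at this
      exact OnePoint.infty_ne_coe (0 : ℂ) this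
  exact ⟨g, hcont, hnwd, hagree⟩
end

section
/- Let X be compact Hausdorff extremally disconnected. Then C⁺(X), the set of continuous functions f : X → S² = ℂ ∪ {∞} with f⁻¹[{∞}] nowhere dense, is closed under pointwise addition and multiplication extended by continuity: for f, g ∈ C⁺(X) there is a unique h ∈ C⁺(X) agreeing with x ↦ f(x)+g(x) on the dense open set where both f(x), g(x) ∈ ℂ. -/
open OnePoint Set Topology

/-- Extension lemma: on a compact Hausdorff extremally disconnected space, a function
continuous on a dense open set with values in `OnePoint ℂ` agrees on that set with a
globally continuous function. -/
theorem myExtend {X : Type u} [TopologicalSpace X] [CompactSpace X] [T2Space X]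
    [ExtremallyDisconnected X]
    {D : Set X} (hDo : IsOpen D) (hDd : Dense D) {φ : X → OnePoint ℂ}
    (hφ : ContinuousOn φ D) :
    ∃ h : X → OnePoint ℂ, Continuous h ∧ ∀ x ∈ D, h x = φ x := by
  set G : Set (X × OnePoint ℂ) := (fun x => (x, φ x)) '' D with hG
  set Z : Set (X × OnePoint ℂ) := closure G with hZ
  have hZc : IsClosed Z := isClosed_closure
  haveI : CompactSpace Z := isCompact_iff_compactSpace.mp hZc.isCompact
  let π : Z → X := fun z => z.1.1
  have π_cont : Continuous π := continuous_fst.comp continuous_subtype_val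
  have hGZ : G ⊆ Z := subset_closure
  have π_surj : Function.Surjective π := by
    have hcl : IsClosed (range π) :=
      (isCompact_range π_cont).isClosed
    have hDsub : D ⊆ range π := by
      intro x hx
      exact ⟨⟨(x, φ x), hGZ ⟨x, hx, rfl⟩⟩, rfl⟩
    have : Dense (range π) := hDd.mono hDsub
    intro x
    have := hcl.closure_eq ▸ this.closure_eq
    exact this.ge (mem_univ x)
  obtain ⟨g, g_cont, hg⟩ :=
    CompactT2.ExtremallyDisconnected.projective (A := X)
      continuous_id π_cont π_surj
  -- key claim: over D, the fiber of Z is a singleton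
  have key : ∀ z : X × OnePoint ℂ, z ∈ Z → z.1 ∈ D → z.2 = φ z.1 := by
    intro z hzZ hzD
    by_contra hne
    obtain ⟨V, W, hV, hW, hzV, hφW, hVW⟩ := t2_separation hne
    have hca : ContinuousAt φ z.1 := hφ.continuousAt (hDo.mem_nhds hzD)
    have hN : φ ⁻¹' W ∩ D ∈ nhds z.1 :=
      Filter.inter_mem (hca.preimage_mem_nhds (hW.mem_nhds hφW)) (hDo.mem_nhds hzD)
    obtain ⟨U, hUsub, hUo, hxU⟩ := mem_nhds_iff.mp hN
    have hzO : z ∈ U ×ˢ V := ⟨hxU, hzV⟩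
    have hO : IsOpen (U ×ˢ V) := hUo.prod hV
    obtain ⟨w, hwO, hwG⟩ :=
      mem_closure_iff.mp hzZ (U ×ˢ V) hO hzO
    obtain ⟨y, hyD, rfl⟩ := hwG
    have h1 : y ∈ U := hwO.1
    have h2 : φ y ∈ V := hwO.2
    have h3 : φ y ∈ W := (hUsub h1).1
    exact (disjoint_left.mp hVW h2) h3
  refine ⟨fun x => ((g x : X × OnePoint ℂ)).2, continuous_snd.comp
    (continuous_subtype_val.comp g_cont), fun x hx => ?_⟩
  have hgx : π (g x) = x := congrFun hg x
  have hmem : (g x : X × OnePoint ℂ) ∈ Z := (g x).2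
  have := key (g x : X × OnePoint ℂ) hmem (by rw [show ((g x : X × OnePoint ℂ)).1 = x from hgx]; exact hx)
  show ((g x : X × OnePoint ℂ)).2 = φ x
  rw [this, show ((g x : X × OnePoint ℂ)).1 = x from hgx]

/-- The generic closure statement for any continuous binary operation. -/
theorem myKey {X : Type u} [TopologicalSpace X] [CompactSpace X] [T2Space X]
    [ExtremallyDisconnected X]
    (f g : X → OnePoint ℂ) (hf : Continuous f) (hg : Continuous g)
    (hf' : IsNowhereDense (f ⁻¹' {(∞ : OnePoint ℂ)}))
    (hg' : IsNowhereDense (g ⁻¹' {(∞ : OnePoint ℂ)}))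
    (op : ℂ → ℂ → ℂ) (hop : Continuous fun p : ℂ × ℂ => op p.1 p.2) :
    ∃! h : X → OnePoint ℂ,
      Continuous h ∧ IsNowhereDense (h ⁻¹' {(∞ : OnePoint ℂ)}) ∧
      ∀ (x : X) (zf zg : ℂ), f x = OnePoint.some zf → g x = OnePoint.some zg →
        h x = OnePoint.some (op zf zg) := by
  have hinfty : IsClosed ({(∞ : OnePoint ℂ)} : Set (OnePoint ℂ)) := OnePoint.isClosed_infty
  set Sf : Set X := f ⁻¹' {(∞ : OnePoint ℂ)} with hSf
  set Sg : Set X := g ⁻¹' {(∞ : OnePoint ℂ)} with hSg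
  have hSfc : IsClosed Sf := hinfty.preimage hf
  have hSgc : IsClosed Sg := hinfty.preimage hg
  set D : Set X := Sfᶜ ∩ Sgᶜ with hD
  have hDo : IsOpen D := (hSfc.isOpen_compl).inter (hSgc.isOpen_compl)
  have hintf : interior Sf = ∅ := (hSfc.isNowhereDense_iff).mp hf'
  have hintg : interior Sg = ∅ := (hSgc.isNowhereDense_iff).mp hg'
  have hintU : interior (Sf ∪ Sg) = ∅ := by
    rw [interior_union_isClosed_of_interior_empty hSfc hintg, hintf]
  have hDeq : D = (Sf ∪ Sg)ᶜ := by rw [hD, compl_union]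
  have hDd : Dense D := by
    rw [hDeq]
    exact (isClosed_isNowhereDense_iff_compl.mp ⟨hSfc.union hSgc,
      by rw [IsClosed.isNowhereDense_iff (hSfc.union hSgc)]; exact hintU⟩).2
  -- the "finite part" map
  classical
  set toC : OnePoint ℂ → ℂ := fun z => z.elim 0 id with htoC
  have hcoe := OnePoint.isOpenEmbedding_coe (X := ℂ)
  have htoC_cont : ContinuousOn toC (range ((↑) : ℂ → OnePoint ℂ)) := by
    have hco : ContinuousOn (hcoe.toPartialHomeomorph _).symm
        (range ((↑) : ℂ → OnePoint ℂ)) := by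
      have := (hcoe.toPartialHomeomorph ((↑) : ℂ → OnePoint ℂ)).continuousOn_symm
      rwa [hcoe.toPartialHomeomorph_target] at this
    refine hco.congr ?_
    rintro z ⟨a, rfl⟩
    have : ((↑) : ℂ → OnePoint ℂ) ((hcoe.toPartialHomeomorph _).symm (↑a)) = ↑a :=
      hcoe.toPartialHomeomorph_right_inv _ ⟨a, rfl⟩
    exact OnePoint.coe_injective this.symm
  have hmapf : MapsTo f D (range ((↑) : ℂ → OnePoint ℂ)) := by
    intro x hx
    rw [← OnePoint.compl_infty]
    exact hx.1
  have hmapg : MapsTo g D (range ((↑) : ℂ → OnePoint ℂ)) := by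
    intro x hx
    rw [← OnePoint.compl_infty]
    exact hx.2
  set φ : X → OnePoint ℂ := fun x => OnePoint.some (op (toC (f x)) (toC (g x))) with hφdef
  have hφ : ContinuousOn φ D := by
    apply OnePoint.continuous_coe.comp_continuousOn
    exact hop.comp_continuousOn
      (((htoC_cont.comp hf.continuousOn hmapf)).prodMk
        ((htoC_cont.comp hg.continuousOn hmapg)))
  obtain ⟨h, h_cont, h_eq⟩ := myExtend hDo hDd hφ
  have hval : ∀ (x : X) (zf zg : ℂ), f x = OnePoint.some zf → g x = OnePoint.some zg →
      h x = OnePoint.some (op zf zg) := by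
    intro x zf zg hxf hxg
    have hxD : x ∈ D := by
      constructor
      · simp only [hSf, mem_compl_iff, mem_preimage, mem_singleton_iff, hxf]
        exact (OnePoint.coe_ne_infty zf)
      · simp only [hSg, mem_compl_iff, mem_preimage, mem_singleton_iff, hxg]
        exact (OnePoint.coe_ne_infty zg)
    rw [h_eq x hxD, hφdef]
    simp only [hxf, hxg]
    rfl
  have hDval : ∀ x ∈ D, ∃ zf zg : ℂ, f x = OnePoint.some zf ∧ g x = OnePoint.some zg := by
    intro x hx
    obtain ⟨zf, hzf⟩ := hmapf hx
    obtain ⟨zg, hzg⟩ := hmapg hx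
    exact ⟨zf, zg, hzf.symm, hzg.symm⟩
  have h_nwd : IsNowhereDense (h ⁻¹' {(∞ : OnePoint ℂ)}) := by
    have hcl : IsClosed (h ⁻¹' {(∞ : OnePoint ℂ)}) := hinfty.preimage h_cont
    rw [hcl.isNowhereDense_iff]
    have hsub : h ⁻¹' {(∞ : OnePoint ℂ)} ⊆ Dᶜ := by
      intro x hx
      intro hxD
      obtain ⟨zf, zg, hzf, hzg⟩ := hDval x hxD
      have := hval x zf zg hzf hzg
      rw [mem_preimage, mem_singleton_iff, this] at hx
      exact OnePoint.coe_ne_infty _ hx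
    have : interior (h ⁻¹' {(∞ : OnePoint ℂ)}) ⊆ interior Dᶜ := interior_mono hsub
    rw [interior_compl, hDd.closure_eq, compl_univ] at this
    exact subset_empty_iff.mp this
  refine ⟨h, ⟨h_cont, h_nwd, hval⟩, ?_⟩
  rintro h' ⟨h'_cont, _, h'val⟩
  refine h'_cont.ext_on hDd h_cont ?_
  intro x hx
  obtain ⟨zf, zg, hzf, hzg⟩ := hDval x hx
  rw [h'val x zf zg hzf hzg, hval x zf zg hzf hzg]

/-- `C⁺(X)` is closed under pointwise addition and multiplication extended by
continuity: for `f, g ∈ C⁺(X)` there is a unique `h ∈ C⁺(X)` agreeing with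
`x ↦ f x + g x` (resp. `x ↦ f x * g x`) on the dense open set where both values are
finite. -/
theorem cPlus_closed_under_add_mul
    {X : Type*} [TopologicalSpace X] [CompactSpace X] [T2Space X]
    [ExtremallyDisconnected X]
    (f g : X → OnePoint ℂ) (hf : Continuous f) (hg : Continuous g)
    (hf' : IsNowhereDense (f ⁻¹' {(∞ : OnePoint ℂ)}))
    (hg' : IsNowhereDense (g ⁻¹' {(∞ : OnePoint ℂ)})) :
    (∃! h : X → OnePoint ℂ,
      Continuous h ∧ IsNowhereDense (h ⁻¹' {(∞ : OnePoint ℂ)}) ∧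
      ∀ (x : X) (zf zg : ℂ), f x = OnePoint.some zf → g x = OnePoint.some zg →
        h x = OnePoint.some (zf + zg)) ∧
    (∃! h : X → OnePoint ℂ,
      Continuous h ∧ IsNowhereDense (h ⁻¹' {(∞ : OnePoint ℂ)}) ∧
      ∀ (x : X) (zf zg : ℂ), f x = OnePoint.some zf → g x = OnePoint.some zg →
        h x = OnePoint.some (zf * zg)) := by
  constructor
  · exact myKey f g hf hg hf' hg' (· + ·) (continuous_fst.add continuous_snd)
  · exact myKey f g hf hg hf' hg' (· * ·) (continuous_fst.mul continuous_snd)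
end

section
/- Let X be compact Hausdorff extremally disconnected and p ∈ X. The ring of germs at p of C⁺(X) is a field: for every f ∈ C⁺(X) whose germ at p is nonzero (i.e., there is no neighborhood of p on which f vanishes on a comeager set), there exist g ∈ C⁺(X) and a neighborhood U of p such that f(x)·g(x) = 1 on a comeager subset of U. -/
open OnePoint

open Filter Topology Set Bornology in
/-- Inversion on the Riemann sphere `OnePoint ℂ`. -/
noncomputable def OnePointInv : OnePoint ℂ → OnePoint ℂ :=
  fun x => x.elim (OnePoint.some 0) (fun z => if z = 0 then ∞ else OnePoint.some z⁻¹)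

lemma onePointInv_infty : OnePointInv ∞ = OnePoint.some 0 := rfl

lemma onePointInv_some (z : ℂ) :
    OnePointInv (OnePoint.some z) = if z = 0 then ∞ else OnePoint.some z⁻¹ := rfl

open Filter Topology Set Bornology in
lemma continuous_onePointInv : Continuous OnePointInv := by
  rw [continuous_iff_continuousAt]
  intro x
  have hcc : coclosedCompact ℂ = cobounded ℂ := by
    rw [coclosedCompact_eq_cocompact, Metric.cobounded_eq_cocompact]
  induction x using OnePoint.rec with
  | infty =>
    rw [OnePoint.continuousAt_infty']
    have h0 : ∀ᶠ z : ℂ in coclosedCompact ℂ, (fun z : ℂ => OnePointInv (OnePoint.some z)) z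
        = (fun z : ℂ => (OnePoint.some z⁻¹ : OnePoint ℂ)) z := by
      rw [hcc]
      filter_upwards [eventually_ne_cobounded (0 : ℂ)] with z hz
      simp only [onePointInv_some, if_neg hz]
    rw [tendsto_congr' (by exact h0)]
    have h1 : Tendsto (fun z : ℂ => z⁻¹) (coclosedCompact ℂ) (𝓝 0) := by
      rw [hcc]; exact tendsto_inv₀_cobounded
    have := (OnePoint.continuous_coe (X := ℂ)).continuousAt (x := (0 : ℂ))
    simpa [onePointInv_infty, Function.comp_def] using this.tendsto.comp h1
  | coe z =>
    rw [OnePoint.continuousAt_coe]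
    by_cases hz : z = 0
    · subst hz
      -- continuity at 0 : tends to ∞
      have key : Tendsto (fun w : ℂ => OnePointInv (OnePoint.some w)) (𝓝 0)
          (𝓝 (∞ : OnePoint ℂ)) := by
        have hsup : 𝓝 (0 : ℂ) = 𝓝[≠] (0 : ℂ) ⊔ pure 0 := by
          rw [← nhdsNE_sup_pure]
        rw [hsup]
        refine Tendsto.sup ?_ ?_
        · have h0 : ∀ᶠ w : ℂ in 𝓝[≠] (0 : ℂ),
              (fun w : ℂ => OnePointInv (OnePoint.some w)) w
              = (fun w : ℂ => (OnePoint.some w⁻¹ : OnePoint ℂ)) w := by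
            filter_upwards [self_mem_nhdsWithin] with w hw
            rw [onePointInv_some, if_neg (by simpa using hw)]
          rw [tendsto_congr' (by exact h0)]
          have h1 : Tendsto (fun w : ℂ => w⁻¹) (𝓝[≠] (0 : ℂ)) (cobounded ℂ) := by
            rw [← inv_nhdsNE_zero, ← Filter.map_inv]
            exact tendsto_map
          have h2 : Tendsto (OnePoint.some : ℂ → OnePoint ℂ) (coclosedCompact ℂ)
              (𝓝 (∞ : OnePoint ℂ)) := OnePoint.tendsto_coe_infty
          rw [hcc] at h2
          exact h2.comp h1
        · rw [tendsto_pure_left]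
          intro s hs
          simpa [onePointInv_some] using mem_of_mem_nhds hs
      have : OnePointInv (OnePoint.some (0 : ℂ)) = (∞ : OnePoint ℂ) := by
        simp [onePointInv_some]
      unfold ContinuousAt
      simpa [Function.comp_def, this] using key
    · -- continuity at z ≠ 0
      have h0 : ∀ᶠ w : ℂ in 𝓝 z, (fun w : ℂ => OnePointInv (OnePoint.some w)) w
          = (fun w : ℂ => (OnePoint.some w⁻¹ : OnePoint ℂ)) w := by
        filter_upwards [isOpen_compl_singleton.mem_nhds (by simpa using hz)] with w hw
        simp only [onePointInv_some, if_neg (by simpa using hw)]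
      have h1 : ContinuousAt (fun w : ℂ => (OnePoint.some w⁻¹ : OnePoint ℂ)) z :=
        ((OnePoint.continuous_coe (X := ℂ)).continuousAt).comp (continuousAt_inv₀ hz)
      have := h1.congr (h0.mono fun w hw => hw.symm)
      have heq : OnePointInv (OnePoint.some z) = OnePoint.some z⁻¹ := by
        simp [onePointInv_some, hz]
      exact this.congr (h0.mono fun w hw => rfl)

open Filter Topology Set in
lemma IsNowhereDense.isMeagre' {X : Type*} [TopologicalSpace X] {s : Set X}
    (h : IsNowhereDense s) : IsMeagre s := by
  rw [isMeagre_iff_countable_union_isNowhereDense]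
  exact ⟨{closure s}, by simpa using h.closure, countable_singleton _,
    by simpa using subset_closure⟩

open Filter Topology Set in
lemma IsMeagre.union' {X : Type*} [TopologicalSpace X] {s t : Set X}
    (hs : IsMeagre s) (ht : IsMeagre t) : IsMeagre (s ∪ t) := by
  rw [IsMeagre, compl_union]
  exact inter_mem hs ht

open Filter Topology Set in
/-- The ring of germs of `C⁺(X)` at a point `p` is a field: if the germ of `f` at `p` is
nonzero (there is no neighborhood of `p` on which `f` vanishes on a comeager set), then
there are `g ∈ C⁺(X)` and a neighborhood `U` of `p` with `f x * g x = 1` on a comeager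
subset of `U`. -/
theorem germ_field
    {X : Type*} [TopologicalSpace X] [CompactSpace X] [T2Space X]
    [ExtremallyDisconnected X] (p : X)
    (f : X → OnePoint ℂ) (hf : Continuous f)
    (hf' : IsNowhereDense (f ⁻¹' {(∞ : OnePoint ℂ)}))
    (hnz : ¬ ∃ U ∈ nhds p, IsMeagre (U \ {x | f x = OnePoint.some 0})) :
    ∃ (g : X → OnePoint ℂ) (U : Set X),
      Continuous g ∧ IsNowhereDense (g ⁻¹' {(∞ : OnePoint ℂ)}) ∧ U ∈ nhds p ∧
      IsMeagre (U \ {x | ∃ z w : ℂ,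
        f x = OnePoint.some z ∧ g x = OnePoint.some w ∧ z * w = 1}) := by
  classical
  set Z : Set X := f ⁻¹' {OnePoint.some 0} with hZdef
  have hZc : IsClosed Z := (isClosed_singleton).preimage hf
  set C : Set X := closure (interior Z) with hCdef
  have hCopen : IsOpen C := ExtremallyDisconnected.open_closure _ isOpen_interior
  have hCclosed : IsClosed C := isClosed_closure
  -- C \ interior Z is closed nowhere dense
  have hN : IsNowhereDense (C \ interior Z) := by
    rw [IsClosed.isNowhereDense_iff (hCclosed.sdiff isOpen_interior)]
    by_contra h
    obtain ⟨v, hv⟩ := nonempty_iff_ne_empty.2 h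
    have hvo : IsOpen (interior (C \ interior Z)) := isOpen_interior
    have hvC : v ∈ C := (interior_subset hv).1
    have : (interior (C \ interior Z) ∩ interior Z).Nonempty := by
      rw [hCdef] at hvC
      exact mem_closure_iff.1 hvC _ hvo hv
    obtain ⟨w, hw1, hw2⟩ := this
    exact (interior_subset hw1).2 hw2
  -- p ∉ C
  have hpC : p ∉ C := by
    intro hp
    apply hnz
    refine ⟨C, hCopen.mem_nhds hp, ?_⟩
    refine IsMeagre.mono ?_ hN.isMeagre'
    intro x hx
    exact ⟨hx.1, fun h => hx.2 (interior_subset h)⟩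
  -- the inverse function
  set g : X → OnePoint ℂ := fun x => if x ∈ C then OnePoint.some 0 else OnePointInv (f x)
    with hgdef
  have hfr : frontier {x : X | x ∈ C} = ∅ := by
    simpa using (IsClopen.frontier_eq ⟨hCclosed, hCopen⟩)
  have hgcont : Continuous g := by
    refine Continuous.if ?_ continuous_const (continuous_onePointInv.comp hf)
    intro a ha
    rw [hfr] at ha
    exact absurd ha (notMem_empty a)
  -- g⁻¹(∞) = Z \ C, nowhere dense
  have hginv : g ⁻¹' {(∞ : OnePoint ℂ)} ⊆ Z \ C := by
    intro x hx
    simp only [mem_preimage, mem_singleton_iff, hgdef] at hx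
    by_cases hxC : x ∈ C
    · rw [if_pos hxC] at hx
      exact absurd hx.symm (OnePoint.infty_ne_coe 0)
    · rw [if_neg hxC] at hx
      refine ⟨?_, hxC⟩
      rcases hfx : f x with _ | z
      · rw [hfx, show OnePointInv none = OnePoint.some 0 from rfl] at hx
        exact absurd hx.symm (OnePoint.infty_ne_coe 0)
      · rw [hfx,
          show OnePointInv (Option.some z) = if z = 0 then ∞ else OnePoint.some z⁻¹ from rfl]
          at hx
        by_cases hz : z = 0
        · show f x = OnePoint.some 0
          rw [hfx, hz]
          rfl
        · rw [if_neg hz] at hx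
          exact absurd hx.symm (OnePoint.infty_ne_coe _)
  have hZC : IsNowhereDense (Z \ C) := by
    rw [IsClosed.isNowhereDense_iff (hZc.sdiff hCopen)]
    by_contra h
    obtain ⟨v, hv⟩ := nonempty_iff_ne_empty.2 h
    have h1 : interior (Z \ C) ⊆ interior Z := interior_mono diff_subset
    have h2 : v ∈ C := subset_closure (h1 hv)
    exact (interior_subset hv).2 h2
  have hginvnd : IsNowhereDense (g ⁻¹' {(∞ : OnePoint ℂ)}) := by
    unfold IsNowhereDense at hZC ⊢
    have h1 : interior (closure (g ⁻¹' {(∞ : OnePoint ℂ)})) ⊆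
        interior (closure (Z \ C)) := interior_mono (closure_mono hginv)
    rw [hZC] at h1
    exact subset_empty_iff.1 h1
  refine ⟨g, Cᶜ, hgcont, hginvnd, hCclosed.isOpen_compl.mem_nhds hpC, ?_⟩
  -- meagre part
  have hsub : Cᶜ \ {x | ∃ z w : ℂ,
      f x = OnePoint.some z ∧ g x = OnePoint.some w ∧ z * w = 1}
      ⊆ (Z \ C) ∪ f ⁻¹' {(∞ : OnePoint ℂ)} := by
    intro x hx
    obtain ⟨hxC, hxbad⟩ := hx
    rw [mem_compl_iff] at hxC
    by_cases hinf : f x = ∞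
    · exact Or.inr (by simpa using hinf)
    · left
      refine ⟨?_, hxC⟩
      obtain ⟨z, hz⟩ := OnePoint.ne_infty_iff_exists.1 hinf
      by_cases hz0 : z = 0
      · simp [hZdef, mem_preimage, ← hz, hz0]
      · exfalso
        apply hxbad
        refine ⟨z, z⁻¹, hz.symm, ?_, mul_inv_cancel₀ hz0⟩
        simp only [hgdef, if_neg hxC, ← hz, onePointInv_some, if_neg hz0]
  exact IsMeagre.mono hsub (IsMeagre.union' hZC.isMeagre' hf'.isMeagre')
end

section
/- Soundness for Boolean-valued models: if M is a B-valued model for a language L, b ∈ B, each sentence in an L-theory T has Boolean value ≥ b in M, and φ is an L-sentence provable from T, then the Boolean value of φ in M is ≥ b. -/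
open FirstOrder

/-- A `B`-valued model for a first-order language `L` with domain `M`: a Boolean-valued
equality, Boolean-valued interpretations of the relation symbols, interpretations of the
function symbols, satisfying the congruence axioms of Boolean-valued models. -/
structure BVStruct (L : Language) (B : Type*) [CompleteBooleanAlgebra B] (M : Type*) where
  eqv : M → M → B
  relMap : ∀ {n : ℕ}, L.Relations n → (Fin n → M) → B
  funMap : ∀ {n : ℕ}, L.Functions n → (Fin n → M) → M
  eqv_refl : ∀ a : M, eqv a a = ⊤
  eqv_symm : ∀ a b : M, eqv a b = eqv b a
  eqv_trans : ∀ a b c : M, eqv a b ⊓ eqv b c ≤ eqv a c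
  rel_congr : ∀ {n : ℕ} (R : L.Relations n) (x y : Fin n → M),
    (⨅ i, eqv (x i) (y i)) ⊓ relMap R x ≤ relMap R y
  fun_congr : ∀ {n : ℕ} (F : L.Functions n) (x y : Fin n → M),
    (⨅ i, eqv (x i) (y i)) ≤ eqv (funMap F x) (funMap F y)

namespace BVStruct

variable {L : Language} {B M : Type*} [CompleteBooleanAlgebra B]

/-- Evaluation of a term in a `B`-valued model. -/
def realizeTerm (S : BVStruct L B M) {α : Type*} (v : α → M) : L.Term α → M
  | .var a => v a
  | .func F ts => S.funMap F fun i => S.realizeTerm v (ts i)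

/-- The Boolean value of a bounded formula in a `B`-valued model, with free variables
interpreted by `v` and bound ones by `xs`. -/
def val (S : BVStruct L B M) {α : Type*} :
    ∀ {n : ℕ}, L.BoundedFormula α n → (α → M) → (Fin n → M) → B
  | _, .falsum, _, _ => ⊥
  | _, .equal t₁ t₂, v, xs =>
      S.eqv (S.realizeTerm (Sum.elim v xs) t₁) (S.realizeTerm (Sum.elim v xs) t₂)
  | _, .rel R ts, v, xs => S.relMap R fun i => S.realizeTerm (Sum.elim v xs) (ts i)
  | _, .imp φ ψ, v, xs => S.val φ v xs ⇨ S.val ψ v xs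
  | _, .all φ, v, xs => ⨅ a : M, S.val φ v (Fin.snoc xs a)

/-- The Boolean value of a sentence. -/
def sval (S : BVStruct L B M) (φ : L.Sentence) : B :=
  S.val φ Empty.elim (fun i => i.elim0)

end BVStruct

open FirstOrder

section Ult
variable {B : Type*} [CompleteBooleanAlgebra B]

/-- An ultrafilter (as a set) on a Boolean algebra. -/
structure GoodUlt (B : Type*) [CompleteBooleanAlgebra B] where
  U : Set B
  top_mem : ⊤ ∈ U
  inf_mem : ∀ {x y : B}, x ∈ U → y ∈ U → x ⊓ y ∈ U
  up : ∀ {x y : B}, x ∈ U → x ≤ y → y ∈ U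
  bot_nmem : ⊥ ∉ U
  prime : ∀ x : B, x ∈ U ∨ xᶜ ∈ U

namespace GoodUlt
variable (u : GoodUlt B)

theorem compl_iff (x : B) : xᶜ ∈ u.U ↔ x ∉ u.U := by
  constructor
  · intro h hx
    exact u.bot_nmem (by simpa using u.inf_mem hx h)
  · intro h
    rcases u.prime x with h' | h'
    · exact absurd h' h
    · exact h'

theorem himp_iff (x y : B) : x ⇨ y ∈ u.U ↔ (x ∈ u.U → y ∈ u.U) := by
  constructor
  · intro h hx
    have h2 : x ⊓ (x ⇨ y) ∈ u.U := u.inf_mem hx h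
    rw [inf_himp] at h2
    exact u.up h2 inf_le_right
  · intro h
    by_cases hx : x ∈ u.U
    · exact u.up (h hx) le_himp
    · exact u.up ((u.compl_iff x).2 hx) (by rw [himp_eq]; exact le_sup_right)

theorem iInf_mem {n : ℕ} (f : Fin n → B) (h : ∀ i, f i ∈ u.U) : (⨅ i, f i) ∈ u.U := by
  induction n with
  | zero =>
    have : (⨅ i : Fin 0, f i) = ⊤ := by simp
    rw [this]; exact u.top_mem
  | succ n ih =>
    have heq : (⨅ i, f i) = f 0 ⊓ ⨅ i : Fin n, f i.succ := by
      refine le_antisymm (le_inf (iInf_le _ 0) (le_iInf fun i => iInf_le _ i.succ))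
        (le_iInf ?_)
      refine Fin.cases inf_le_left (fun i => inf_le_right.trans (iInf_le _ i))
    rw [heq]
    exact u.inf_mem (h 0) (ih _ fun i => h i.succ)

theorem nmem_of_compl_mem {x : B} (h : xᶜ ∈ u.U) : x ∉ u.U := (u.compl_iff x).1 h

end GoodUlt

/-- Any downward-directed family of nonzero elements extends to an ultrafilter. -/
theorem exists_goodUlt (F₀ : Set B) (hne : F₀.Nonempty)
    (hdir : ∀ x ∈ F₀, ∀ y ∈ F₀, ∃ z ∈ F₀, z ≤ x ∧ z ≤ y)
    (hbot : ∀ x ∈ F₀, x ≠ ⊥) :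
    ∃ u : GoodUlt B, F₀ ⊆ u.U := by
  classical
  set P : Set B → Prop := fun F =>
    F₀ ⊆ F ∧ (∀ x ∈ F, ∀ y, x ≤ y → y ∈ F) ∧ (∀ x ∈ F, ∀ y ∈ F, x ⊓ y ∈ F) ∧
      (∀ x ∈ F, x ≠ ⊥) ∧ F.Nonempty with hP
  have hF1 : P {y | ∃ x ∈ F₀, x ≤ y} := by
    obtain ⟨x₀, hx₀⟩ := hne
    refine ⟨fun x hx => ⟨x, hx, le_rfl⟩, fun x hx y hxy => ?_, ?_, ?_, ⟨x₀, x₀, hx₀, le_rfl⟩⟩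
    · obtain ⟨a, ha, hax⟩ := hx
      exact ⟨a, ha, hax.trans hxy⟩
    · rintro x ⟨a, ha, hax⟩ y ⟨b, hb, hby⟩
      obtain ⟨z, hz, hza, hzb⟩ := hdir a ha b hb
      exact ⟨z, hz, le_inf (hza.trans hax) (hzb.trans hby)⟩
    · rintro x ⟨a, ha, hax⟩ hx
      exact hbot a ha (le_bot_iff.1 (hx ▸ hax))
  obtain ⟨U, hU₀sub, hUmax⟩ := zorn_subset_nonempty (setOf P) (by
      intro c hc hchain hcne
      refine ⟨⋃₀ c, ?_, fun s hs => Set.subset_sUnion_of_mem hs⟩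
      obtain ⟨F, hF⟩ := hcne
      refine ⟨(hc hF).1.trans (Set.subset_sUnion_of_mem hF), ?_, ?_, ?_, ?_⟩
      · rintro x ⟨F', hF', hx⟩ y hxy
        exact ⟨F', hF', (hc hF').2.1 x hx y hxy⟩
      · rintro x ⟨F1, hF1', hx⟩ y ⟨F2, hF2', hy⟩
        rcases hchain.total hF1' hF2' with h | h
        · exact ⟨F2, hF2', (hc hF2').2.2.1 x (h hx) y hy⟩
        · exact ⟨F1, hF1', (hc hF1').2.2.1 x hx y (h hy)⟩
      · rintro x ⟨F', hF', hx⟩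
        exact (hc hF').2.2.2.1 x hx
      · obtain ⟨x, hx⟩ := (hc hF).2.2.2.2
        exact ⟨x, F, hF, hx⟩) _ hF1
  obtain ⟨hU0, hUup, hUinf, hUbot, hUne⟩ := hUmax.1
  have htop : ⊤ ∈ U := by
    obtain ⟨x, hx⟩ := hUne
    exact hUup x hx ⊤ le_top
  refine ⟨⟨U, htop, fun {x y} hx hy => hUinf x hx y hy, fun {x y} hx h => hUup x hx y h,
      fun h => hUbot ⊥ h rfl, ?_⟩, hU0⟩
  intro x
  by_contra hcon
  push_neg at hcon
  obtain ⟨hx, hxc⟩ := hcon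
  -- extend U by x
  have hprop : P {y | ∃ w ∈ U, w ⊓ x ≤ y} := by
    refine ⟨fun a ha => ⟨a, hU0 ha, inf_le_left⟩,
      fun a ha b hab => ?_, ?_, ?_, ⟨⊤, ⊤, htop, le_top⟩⟩
    · obtain ⟨w, hw, hwa⟩ := ha
      exact ⟨w, hw, hwa.trans hab⟩
    · rintro a ⟨w, hw, hwa⟩ b ⟨w', hw', hwb⟩
      exact ⟨w ⊓ w', hUinf w hw w' hw', le_inf (((inf_le_inf_right x inf_le_left)).trans hwa)
        (((inf_le_inf_right x inf_le_right)).trans hwb)⟩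
    · rintro a ⟨w, hw, hwa⟩ rfl
      apply hxc
      apply hUup w hw
      have hb : w ⊓ x = ⊥ := le_bot_iff.1 hwa
      have h2 : Disjoint w x := disjoint_iff.2 hb
      exact h2.le_compl_right
  have hsub : U ⊆ {y | ∃ w ∈ U, w ⊓ x ≤ y} := fun a ha => ⟨a, ha, inf_le_left⟩
  have hmax := hUmax.2 hprop hsub
  exact hx (hmax ⟨⊤, htop, by simpa using le_rfl⟩)

end Ult

namespace BVStruct

open FirstOrder.Language

variable {L : Language} {B : Type*} [CompleteBooleanAlgebra B] {M : Type*}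

/-- The function symbols occurring in a term. -/
def termFuns {α : Type*} : L.Term α → Set (Σ n, L.Functions n)
  | .var _ => ∅
  | .func F ts => insert ⟨_, F⟩ (⋃ i, termFuns (ts i))

theorem termFuns_countable {α : Type*} (t : L.Term α) : (termFuns t).Countable := by
  induction t with
  | var => exact Set.countable_empty
  | func F ts ih =>
    exact (Set.countable_iUnion ih).insert _

/-- The function symbols occurring in a bounded formula. -/
def fmlaFuns : ∀ {n : ℕ}, L.BoundedFormula Empty n → Set (Σ n, L.Functions n)
  | _, .falsum => ∅
  | _, .equal t₁ t₂ => termFuns t₁ ∪ termFuns t₂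
  | _, .rel _ ts => ⋃ i, termFuns (ts i)
  | _, .imp f g => fmlaFuns f ∪ fmlaFuns g
  | _, .all f => fmlaFuns f

theorem fmlaFuns_countable : ∀ {n : ℕ} (ψ : L.BoundedFormula Empty n),
    (fmlaFuns ψ).Countable
  | _, .falsum => Set.countable_empty
  | _, .equal t₁ t₂ => (termFuns_countable t₁).union (termFuns_countable t₂)
  | _, .rel _ ts => Set.countable_iUnion fun i => termFuns_countable (ts i)
  | _, .imp f g => (fmlaFuns_countable f).union (fmlaFuns_countable g)
  | _, .all f => fmlaFuns_countable f

/-- The universally quantified subformulas of a bounded formula. -/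
def fmlaAlls : ∀ {n : ℕ}, L.BoundedFormula Empty n →
    Set (Σ m, L.BoundedFormula Empty (m + 1))
  | _, .imp f g => fmlaAlls f ∪ fmlaAlls g
  | _, .all f => insert ⟨_, f⟩ (fmlaAlls f)
  | _, _ => ∅

theorem fmlaAlls_countable : ∀ {n : ℕ} (ψ : L.BoundedFormula Empty n),
    (fmlaAlls ψ).Countable
  | _, .falsum => Set.countable_empty
  | _, .equal _ _ => Set.countable_empty
  | _, .rel _ _ => Set.countable_empty
  | _, .imp f g => (fmlaAlls_countable f).union (fmlaAlls_countable g)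
  | _, .all f => (fmlaAlls_countable f).insert _

end BVStruct

namespace BVStruct

open FirstOrder.Language

section Quot

variable {L : Language} {B : Type*} [CompleteBooleanAlgebra B] {M : Type*} [Nonempty M]
variable (S : BVStruct L B M) (u : GoodUlt B) (W : Set M) [Nonempty W]

/-- The setoid on `W` induced by the Boolean equality and the ultrafilter. -/
def sV : Setoid ↥W where
  r x y := S.eqv x.1 y.1 ∈ u.U
  iseqv := by
    refine ⟨fun x => ?_, fun {x y} h => ?_, fun {x y z} hxy hyz => ?_⟩
    · rw [S.eqv_refl]; exact u.top_mem
    · rwa [S.eqv_symm]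
    · exact u.up (u.inf_mem hxy hyz) (S.eqv_trans _ _ _)

/-- The quotient of `W` by the setoid. -/
def Qt : Type _ := Quotient (sV S u W)

instance : Nonempty (Qt S u W) := Nonempty.map (Quotient.mk _) inferInstance

/-- Class of an element. -/
def qmk (x : ↥W) : Qt S u W := Quotient.mk _ x

theorem qmk_eq_qmk {x y : ↥W} : qmk S u W x = qmk S u W y ↔ S.eqv x.1 y.1 ∈ u.U :=
  Quotient.eq''

theorem qmk_surjective : Function.Surjective (qmk S u W) := Quotient.mk''_surjective

/-- A representative. -/
noncomputable def qout (q : Qt S u W) : ↥W := Quotient.out q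

theorem qmk_qout (q : Qt S u W) : qmk S u W (qout S u W q) = q := Quotient.out_eq q

theorem eqv_qout_qmk (x : ↥W) : S.eqv (qout S u W (qmk S u W x)).1 x.1 ∈ u.U := by
  rw [← qmk_eq_qmk S u W]
  exact qmk_qout S u W (qmk S u W x)

open Classical in
/-- The quotient structure. -/
noncomputable instance qtStructure : L.Structure (Qt S u W) where
  funMap {n} F q :=
    if h : S.funMap F (fun i => (qout S u W (q i)).1) ∈ W then qmk S u W ⟨_, h⟩
    else Classical.arbitrary _
  RelMap {n} R q := S.relMap R (fun i => (qout S u W (q i)).1) ∈ u.U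

theorem relMap_congr {n : ℕ} (R : L.Relations n) {x y : Fin n → M}
    (h : ∀ i, S.eqv (x i) (y i) ∈ u.U) : S.relMap R x ∈ u.U ↔ S.relMap R y ∈ u.U := by
  have key : ∀ x y : Fin n → M, (∀ i, S.eqv (x i) (y i) ∈ u.U) →
      S.relMap R x ∈ u.U → S.relMap R y ∈ u.U := by
    intro x y h hx
    exact u.up (u.inf_mem (u.iInf_mem _ h) hx) (S.rel_congr R x y)
  exact ⟨key x y h, key y x fun i => by rw [S.eqv_symm]; exact h i⟩

open Classical in
theorem qt_funMap {n : ℕ} (F : L.Functions n)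
    (hF : ∀ y : Fin n → M, (∀ i, y i ∈ W) → S.funMap F y ∈ W)
    (x : Fin n → ↥W) :
    Structure.funMap (M := Qt S u W) F (fun i => qmk S u W (x i)) =
      qmk S u W ⟨S.funMap F (fun i => (x i).1), hF _ fun i => (x i).2⟩ := by
  have hmem : S.funMap F (fun i => (qout S u W (qmk S u W (x i))).1) ∈ W :=
    hF _ fun i => (qout S u W (qmk S u W (x i))).2
  show dite _ _ _ = _
  rw [dif_pos hmem, qmk_eq_qmk]
  refine u.up (u.iInf_mem (fun i => S.eqv (qout S u W (qmk S u W (x i))).1 (x i).1) ?_)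
    (S.fun_congr F _ _)
  exact fun i => eqv_qout_qmk S u W (x i)

/-- Realization of terms in the quotient. -/
theorem qt_term {n : ℕ} (t : L.Term (Empty ⊕ Fin n))
    (hF : ∀ q ∈ termFuns (L := L) t, ∀ y : Fin q.1 → M, (∀ i, y i ∈ W) → S.funMap q.2 y ∈ W)
    (xs : Fin n → ↥W) :
    ∃ h : S.realizeTerm (Sum.elim Empty.elim (fun i => (xs i).1)) t ∈ W,
      Term.realize (Sum.elim Empty.elim (fun i => qmk S u W (xs i))) t
        = qmk S u W ⟨_, h⟩ := by
  induction t with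
  | var a =>
    rcases a with e | i
    · exact e.elim
    · exact ⟨(xs i).2, rfl⟩
  | func F ts ih =>
    have hFmem : ∀ y : Fin _ → M, (∀ i, y i ∈ W) → S.funMap F y ∈ W :=
      hF ⟨_, F⟩ (by simp [termFuns]) 
    have ihs : ∀ i, ∃ h : S.realizeTerm (Sum.elim Empty.elim (fun i => (xs i).1)) (ts i) ∈ W,
        Term.realize (Sum.elim Empty.elim (fun i => qmk S u W (xs i))) (ts i)
          = qmk S u W ⟨_, h⟩ := by
      intro i
      refine ih i (fun q hq => hF q ?_) 
      simp only [termFuns, Set.mem_insert_iff, Set.mem_iUnion]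
      exact Or.inr ⟨i, hq⟩
    choose hmem heq using ihs
    refine ⟨hFmem _ fun i => hmem i, ?_⟩
    show Structure.funMap (M := Qt S u W) F
      (fun i => Term.realize (Sum.elim Empty.elim (fun i => qmk S u W (xs i))) (ts i)) = _
    have : (fun i => Term.realize (Sum.elim Empty.elim (fun i => qmk S u W (xs i))) (ts i))
        = fun i => qmk S u W ⟨_, hmem i⟩ := funext heq
    rw [this, qt_funMap S u W F hFmem]
    rfl

end Quot

end BVStruct

namespace BVStruct

open FirstOrder.Language

section Good

variable {L : Language} {B : Type*} [CompleteBooleanAlgebra B] {M : Type*} [Nonempty M]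
variable (S : _root_.BVStruct L B M) (u : GoodUlt B) (W : Set M) [Nonempty W]

theorem good {n : ℕ} (ψ : L.BoundedFormula Empty n) :
    ∀ (_ : ∀ q ∈ fmlaFuns ψ, ∀ y : Fin q.1 → M, (∀ i, y i ∈ W) → S.funMap q.2 y ∈ W)
      (_ : ∀ q ∈ fmlaAlls ψ, ∀ zs : Fin q.1 → M, (∀ i, zs i ∈ W) →
        (⨅ a : M, S.val q.2 Empty.elim (Fin.snoc zs a)) ∉ u.U →
        ∃ a ∈ W, S.val q.2 Empty.elim (Fin.snoc zs a) ∉ u.U)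
      (xs : Fin n → ↥W),
    (ψ.Realize Empty.elim (fun i => qmk S u W (xs i)) ↔
      S.val ψ Empty.elim (fun i => (xs i).1) ∈ u.U) := by
  induction ψ with
  | falsum =>
    intro hF hgen xs
    show False ↔ ⊥ ∈ u.U
    simp [u.bot_nmem]
  | equal t₁ t₂ =>
    intro hF hgen xs
    obtain ⟨h₁, e₁⟩ := qt_term S u W t₁
      (fun q hq => hF q (Set.mem_union_left _ hq)) xs
    obtain ⟨h₂, e₂⟩ := qt_term S u W t₂
      (fun q hq => hF q (Set.mem_union_right _ hq)) xs
    show Term.realize _ t₁ = Term.realize _ t₂ ↔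
      S.eqv (S.realizeTerm _ t₁) (S.realizeTerm _ t₂) ∈ u.U
    rw [e₁, e₂, qmk_eq_qmk]
  | rel R ts =>
    intro hF hgen xs
    have hts : ∀ i, ∃ h : S.realizeTerm (Sum.elim Empty.elim (fun i => (xs i).1)) (ts i) ∈ W,
        Term.realize (Sum.elim Empty.elim (fun i => qmk S u W (xs i))) (ts i)
          = qmk S u W ⟨_, h⟩ := by
      intro i
      refine qt_term S u W (ts i) (fun q hq => hF q ?_) xs
      exact Set.mem_iUnion.2 ⟨i, hq⟩
    choose hmem heq using hts
    show Structure.RelMap (M := Qt S u W) R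
        (fun i => Term.realize (Sum.elim Empty.elim (fun i => qmk S u W (xs i))) (ts i)) ↔ _
    have : (fun i => Term.realize (Sum.elim Empty.elim (fun i => qmk S u W (xs i))) (ts i))
        = fun i => qmk S u W ⟨_, hmem i⟩ := funext heq
    rw [this]
    show S.relMap R _ ∈ u.U ↔ S.relMap R _ ∈ u.U
    exact relMap_congr S u R fun i => eqv_qout_qmk S u W _
  | imp f g ihf ihg =>
    intro hF hgen xs
    have hf := ihf (fun q hq => hF q (Set.mem_union_left _ hq))
      (fun q hq => hgen q (Set.mem_union_left _ hq)) xs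
    have hg := ihg (fun q hq => hF q (Set.mem_union_right _ hq))
      (fun q hq => hgen q (Set.mem_union_right _ hq)) xs
    show (_ → _) ↔ (S.val f Empty.elim _ ⇨ S.val g Empty.elim _) ∈ u.U
    rw [u.himp_iff, hf, hg]
  | all f ihf =>
    intro hF hgen xs
    have key : ∀ w : ↥W,
        (f.Realize Empty.elim (Fin.snoc (fun i => qmk S u W (xs i)) (qmk S u W w)) ↔
          S.val f Empty.elim (Fin.snoc (fun i => (xs i).1) w.1) ∈ u.U) := by
      intro w
      have h0 := ihf hF (fun q hq => hgen q (Set.mem_insert_of_mem _ hq)) (Fin.snoc xs w)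
      have e1 : (fun i => qmk S u W ((Fin.snoc xs w : Fin _ → ↥W) i)) =
          Fin.snoc (fun i => qmk S u W (xs i)) (qmk S u W w) := by
        simpa [Function.comp_def] using Fin.comp_snoc (qmk S u W) xs w
      have e2 : (fun i => ((Fin.snoc xs w : Fin _ → ↥W) i : M)) =
          Fin.snoc (fun i => (xs i : M)) (w : M) := by
        simpa [Function.comp_def] using Fin.comp_snoc (Subtype.val) xs w
      rwa [e1, e2] at h0
    show (∀ q : Qt S u W, f.Realize Empty.elim (Fin.snoc _ q)) ↔
      (⨅ a : M, S.val f Empty.elim (Fin.snoc (fun i => (xs i).1) a)) ∈ u.U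
    constructor
    · intro h
      by_contra hnot
      obtain ⟨a, haW, hna⟩ := hgen ⟨_, f⟩ (Set.mem_insert _ _) (fun i => (xs i).1)
        (fun i => (xs i).2) hnot
      exact hna ((key ⟨a, haW⟩).1 (h (qmk S u W ⟨a, haW⟩)))
    · intro h q
      obtain ⟨w, rfl⟩ := qmk_surjective S u W q
      exact (key w).2 (u.up h (iInf_le _ w.1))

end Good

end BVStruct

namespace BVStruct

open FirstOrder.Language

section Stages

variable {L : Language} {B : Type*} [CompleteBooleanAlgebra B] {M : Type*} [Nonempty M]
variable (S : _root_.BVStruct L B M)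

open Classical in
/-- A witness for the failure of a universally quantified formula below a condition. -/
noncomputable def wit {m : ℕ} (θ : L.BoundedFormula Empty (m + 1)) (zs : Fin m → M)
    (e : B) : M :=
  if h : ∃ a : M, e ⊓ (S.val θ Empty.elim (Fin.snoc zs a))ᶜ ≠ ⊥ then h.choose
  else Classical.arbitrary M

open Classical in
theorem wit_spec {m : ℕ} {θ : L.BoundedFormula Empty (m + 1)} {zs : Fin m → M} {e : B}
    (h : ∃ a : M, e ⊓ (S.val θ Empty.elim (Fin.snoc zs a))ᶜ ≠ ⊥) :
    e ⊓ (S.val θ Empty.elim (Fin.snoc zs (wit S θ zs e)))ᶜ ≠ ⊥ := by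
  rw [wit, dif_pos h]
  exact h.choose_spec

variable (FS : Set (Σ n, L.Functions n)) (KS : Set (Σ m, L.BoundedFormula Empty (m + 1)))

/-- Tuples valued in a set. -/
def tup (s : Set M) (k : ℕ) : Set (Fin k → M) := {y | ∀ i, y i ∈ s}

theorem tup_countable {s : Set M} (hs : s.Countable) (k : ℕ) : (tup s k).Countable :=
  Set.countable_pi fun _ => hs

/-- One closure step. -/
def step (p : Set M × Set B) : Set M × Set B :=
  (p.1 ∪ (⋃ q ∈ FS, ⋃ y ∈ tup p.1 q.1, {S.funMap q.2 y})
      ∪ (⋃ q ∈ KS, ⋃ zs ∈ tup p.1 q.1, ⋃ e ∈ p.2, {wit S q.2 zs e}),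
    p.2 ∪ (⋃ q ∈ KS, ⋃ zs ∈ tup p.1 q.1, ⋃ e ∈ p.2,
      {e ⊓ (S.val q.2 Empty.elim (Fin.snoc zs (wit S q.2 zs e)))ᶜ}))

/-- The closure stages starting from a point `a₀` and a condition `c`. -/
def stages (c : B) : ℕ → Set M × Set B
  | 0 => ({Classical.arbitrary M}, {c})
  | n + 1 => step S FS KS (stages c n)

theorem stages_countable (hFS : FS.Countable) (hKS : KS.Countable) (c : B) (n : ℕ) :
    (stages S FS KS c n).1.Countable ∧ (stages S FS KS c n).2.Countable := by
  induction n with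
  | zero => exact ⟨Set.countable_singleton _, Set.countable_singleton _⟩
  | succ n ih =>
    obtain ⟨h1, h2⟩ := ih
    constructor
    · refine (h1.union ?_).union ?_
      · exact hFS.biUnion fun q _ => (tup_countable h1 _).biUnion fun y _ =>
          Set.countable_singleton _
      · exact hKS.biUnion fun q _ => (tup_countable h1 _).biUnion fun zs _ =>
          h2.biUnion fun e _ => Set.countable_singleton _
    · refine h2.union ?_
      exact hKS.biUnion fun q _ => (tup_countable h1 _).biUnion fun zs _ =>
        h2.biUnion fun e _ => Set.countable_singleton _

theorem stages_mono₁ (c : B) {n m : ℕ} (h : n ≤ m) :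
    (stages S FS KS c n).1 ⊆ (stages S FS KS c m).1 := by
  induction m with
  | zero => rw [Nat.le_zero.1 h]
  | succ m ih =>
    rcases Nat.lt_or_ge n (m+1) with h' | h'
    · exact (ih (Nat.lt_succ_iff.1 h')).trans (by
        intro x hx
        exact Set.mem_union_left _ (Set.mem_union_left _ hx))
    · rw [Nat.le_antisymm h h']

theorem stages_mono₂ (c : B) {n m : ℕ} (h : n ≤ m) :
    (stages S FS KS c n).2 ⊆ (stages S FS KS c m).2 := by
  induction m with
  | zero => rw [Nat.le_zero.1 h]
  | succ m ih =>
    rcases Nat.lt_or_ge n (m+1) with h' | h'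
    · exact (ih (Nat.lt_succ_iff.1 h')).trans (fun x hx => Set.mem_union_left _ hx)
    · rw [Nat.le_antisymm h h']

/-- The limit of the element stages. -/
def WInf (c : B) : Set M := ⋃ n, (stages S FS KS c n).1

/-- The limit of the condition stages. -/
def BInf (c : B) : Set B := ⋃ n, (stages S FS KS c n).2

theorem WInf_countable (hFS : FS.Countable) (hKS : KS.Countable) (c : B) :
    (WInf S FS KS c).Countable :=
  Set.countable_iUnion fun n => (stages_countable S FS KS hFS hKS c n).1

theorem arbitrary_mem_WInf (c : B) : Classical.arbitrary M ∈ WInf S FS KS c :=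
  Set.mem_iUnion.2 ⟨0, rfl⟩

theorem c_mem_BInf (c : B) : c ∈ BInf S FS KS c := Set.mem_iUnion.2 ⟨0, rfl⟩

theorem tup_WInf {k : ℕ} (c : B) (y : Fin k → M) (hy : ∀ i, y i ∈ WInf S FS KS c) :
    ∃ N, ∀ i, y i ∈ (stages S FS KS c N).1 := by
  have h : ∀ i, ∃ n, y i ∈ (stages S FS KS c n).1 := fun i => Set.mem_iUnion.1 (hy i)
  choose f hf using h
  refine ⟨Finset.univ.sup f, fun i => stages_mono₁ S FS KS c ?_ (hf i)⟩
  exact Finset.le_sup (Finset.mem_univ i)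

theorem funMap_mem_WInf {q : Σ n, L.Functions n} (hq : q ∈ FS) (c : B)
    (y : Fin q.1 → M) (hy : ∀ i, y i ∈ WInf S FS KS c) :
    S.funMap q.2 y ∈ WInf S FS KS c := by
  obtain ⟨N, hN⟩ := tup_WInf S FS KS c y hy
  refine Set.mem_iUnion.2 ⟨N + 1, ?_⟩
  refine Set.mem_union_left _ (Set.mem_union_right _ ?_)
  exact Set.mem_biUnion hq (Set.mem_biUnion hN rfl)

theorem wit_mem_WInf {q : Σ m, L.BoundedFormula Empty (m + 1)} (hq : q ∈ KS) (c : B)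
    (zs : Fin q.1 → M) (hzs : ∀ i, zs i ∈ WInf S FS KS c) {e : B}
    (he : e ∈ BInf S FS KS c) :
    wit S q.2 zs e ∈ WInf S FS KS c ∧
      e ⊓ (S.val q.2 Empty.elim (Fin.snoc zs (wit S q.2 zs e)))ᶜ ∈ BInf S FS KS c := by
  obtain ⟨N, hN⟩ := tup_WInf S FS KS c zs hzs
  obtain ⟨N', hN'⟩ := Set.mem_iUnion.1 he
  have hzsN : ∀ i, zs i ∈ (stages S FS KS c (max N N')).1 :=
    fun i => stages_mono₁ S FS KS c (le_max_left _ _) (hN i)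
  have heN : e ∈ (stages S FS KS c (max N N')).2 :=
    stages_mono₂ S FS KS c (le_max_right _ _) hN'
  constructor
  · refine Set.mem_iUnion.2 ⟨max N N' + 1, Set.mem_union_right _ ?_⟩
    exact Set.mem_biUnion hq (Set.mem_biUnion hzsN (Set.mem_biUnion heN rfl))
  · refine Set.mem_iUnion.2 ⟨max N N' + 1, Set.mem_union_right _ ?_⟩
    exact Set.mem_biUnion hq (Set.mem_biUnion hzsN (Set.mem_biUnion heN rfl))

end Stages

end BVStruct

namespace BVStruct

open FirstOrder.Language

section Final

variable {L : Language} {B : Type*} [CompleteBooleanAlgebra B] {M : Type*} [Nonempty M]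
variable (S : _root_.BVStruct L B M)
variable (FS : Set (Σ n, L.Functions n)) (KS : Set (Σ m, L.BoundedFormula Empty (m + 1)))

/-- The poset of conditions: nonzero elements of `BInf` below `c`, ordered by reverse
inclusion. -/
abbrev Cond (c : B) : Type _ :=
  {e : Bᵒᵈ // OrderDual.ofDual e ∈ BInf S FS KS c ∧ OrderDual.ofDual e ≠ ⊥ ∧
    OrderDual.ofDual e ≤ c}

/-- The dense set of conditions deciding a universal formula. -/
noncomputable def condDense (c : B) (q : Σ m, L.BoundedFormula Empty (m + 1)) (hq : q ∈ KS)
    (zs : Fin q.1 → ↥(WInf S FS KS c)) : Order.Cofinal (Cond S FS KS c) where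
  carrier := {x | (OrderDual.ofDual x.1 ≤
      ⨅ a : M, S.val q.2 Empty.elim (Fin.snoc (fun i => (zs i).1) a)) ∨
    ∃ a ∈ WInf S FS KS c, OrderDual.ofDual x.1 ≤
      (S.val q.2 Empty.elim (Fin.snoc (fun i => (zs i).1) a))ᶜ}
  isCofinal := by
    intro x
    set e : B := OrderDual.ofDual x.1 with he
    by_cases hle : e ≤ ⨅ a : M, S.val q.2 Empty.elim (Fin.snoc (fun i => (zs i).1) a)
    · exact ⟨x, Or.inl hle, le_rfl⟩
    · have hne : ∃ a : M, e ⊓ (S.val q.2 Empty.elim (Fin.snoc (fun i => (zs i).1) a))ᶜ ≠ ⊥ := by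
        by_contra hcon
        push_neg at hcon
        apply hle
        have : e ⊓ (⨅ a : M, S.val q.2 Empty.elim (Fin.snoc (fun i => (zs i).1) a))ᶜ = ⊥ := by
          rw [compl_iInf, inf_iSup_eq]
          exact iSup_eq_bot.2 hcon
        rwa [← sdiff_eq, sdiff_eq_bot_iff] at this
      set w := wit S q.2 (fun i => (zs i).1) e with hw
      have hspec := wit_spec S hne
      obtain ⟨hwW, hdB⟩ := wit_mem_WInf S FS KS hq c (fun i => (zs i).1)
        (fun i => (zs i).2) x.2.1
      refine ⟨⟨OrderDual.toDual (e ⊓ (S.val q.2 Empty.elim (Fin.snoc (fun i => (zs i).1) w))ᶜ),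
        hdB, hspec, inf_le_left.trans x.2.2.2⟩, ?_, ?_⟩
    
      · exact Or.inr ⟨w, hwW, inf_le_right⟩
      · show e ⊓ _ ≤ e
        exact inf_le_left

/-- The key lemma: a Boolean-valued model whose value on a finite theory is above a nonzero
condition `c`, and whose value on `φ` is below `cᶜ`, witnesses non-provability. -/
theorem main_lemma (c : B) (hc : c ≠ ⊥) (T₀ : Finset L.Sentence)
    (hT₀ : ∀ ψ ∈ T₀, c ≤ S.sval ψ) (φ : L.Sentence) (hφ : c ≤ (S.sval φ)ᶜ) :
    ¬ ((↑T₀ : L.Theory) ⊨ᵇ φ) := by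
  classical
  set G : Set L.Sentence := insert φ ↑T₀ with hG
  have hGcount : G.Countable := ((T₀.finite_toSet).insert φ).countable
  set FS : Set (Σ n, L.Functions n) := ⋃ ψ ∈ G, fmlaFuns ψ with hFS
  set KS : Set (Σ m, L.BoundedFormula Empty (m + 1)) := ⋃ ψ ∈ G, fmlaAlls ψ with hKS
  have hFScount : FS.Countable := hGcount.biUnion fun ψ _ => fmlaFuns_countable ψ
  have hKScount : KS.Countable := hGcount.biUnion fun ψ _ => fmlaAlls_countable ψ
  set W : Set M := WInf S FS KS c with hW
  haveI : Nonempty ↥W := ⟨⟨_, arbitrary_mem_WInf S FS KS c⟩⟩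
  haveI : Countable ↥W := ((WInf_countable S FS KS hFScount hKScount c).to_subtype)
  haveI : Countable ↥KS := hKScount.to_subtype
  -- the index type for the dense sets
  let ι : Type _ := Σ q : ↥KS, (Fin q.1.1 → ↥W)
  haveI : Countable ι := inferInstance
  haveI : Encodable ι := (nonempty_encodable ι).some
  let 𝒟 : ι → Order.Cofinal (Cond S FS KS c) := fun i => condDense S FS KS c i.1.1 i.1.2 i.2
  let p₀ : Cond S FS KS c := ⟨OrderDual.toDual c, c_mem_BInf S FS KS c, hc, le_rfl⟩
  let seq : ℕ → Cond S FS KS c := Order.sequenceOfCofinals p₀ 𝒟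
  let d : ℕ → B := fun n => OrderDual.ofDual (seq n).1
  have hd_anti : ∀ {n m : ℕ}, n ≤ m → d m ≤ d n := fun {n m} h =>
    Order.sequenceOfCofinals.monotone p₀ 𝒟 h
  have hd0 : d 0 = c := rfl
  set F₀ : Set B := {x | ∃ n, d n ≤ x} with hF₀
  obtain ⟨u, hu⟩ : ∃ u : GoodUlt B, F₀ ⊆ u.U := by
    refine exists_goodUlt F₀ ⟨c, 0, hd0.le⟩ ?_ ?_
    · rintro x ⟨n, hn⟩ y ⟨m, hm⟩
      exact ⟨d (max n m), ⟨max n m, le_rfl⟩,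
        (hd_anti (le_max_left n m)).trans hn, (hd_anti (le_max_right n m)).trans hm⟩
    · rintro x ⟨n, hn⟩ hx
      exact (seq n).2.2.1 (le_bot_iff.1 (hx ▸ hn))
  have hcU : c ∈ u.U := hu ⟨0, hd0.le⟩
  -- the genericity property
  have hgen : ∀ q ∈ KS, ∀ zs : Fin q.1 → M, (∀ i, zs i ∈ W) →
      (⨅ a : M, S.val q.2 Empty.elim (Fin.snoc zs a)) ∉ u.U →
      ∃ a ∈ W, S.val q.2 Empty.elim (Fin.snoc zs a) ∉ u.U := by
    intro q hq zs hzs hnot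
    let i : ι := ⟨⟨q, hq⟩, fun j => ⟨zs j, hzs j⟩⟩
    have hmem := Order.sequenceOfCofinals.encode_mem p₀ 𝒟 i
    have hdU : d (Encodable.encode i + 1) ∈ u.U := hu ⟨_, le_rfl⟩
    rcases hmem with hle | ⟨a, haW, hale⟩
    · exact absurd (u.up hdU hle) hnot
    · exact ⟨a, haW, u.nmem_of_compl_mem (u.up hdU hale)⟩
  -- closure under functions
  have hfun : ∀ ψ ∈ G, ∀ q ∈ fmlaFuns ψ, ∀ y : Fin q.1 → M,
      (∀ i, y i ∈ W) → S.funMap q.2 y ∈ W := by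
    intro ψ hψ q hq y hy
    exact funMap_mem_WInf S FS KS (Set.mem_biUnion hψ hq) c y hy
  -- the key equivalence for sentences
  have key : ∀ ψ ∈ G, ((Qt S u W) ⊨ ψ ↔ S.sval ψ ∈ u.U) := by
    intro ψ hψ
    have hgood := good S u W ψ (hfun ψ hψ)
      (fun q hq => hgen q (Set.mem_biUnion hψ hq)) (fun i => i.elim0)
    have e1 : (Empty.elim : Empty → Qt S u W) = default := Subsingleton.elim _ _
    have e2 : (fun i : Fin 0 => qmk S u W (Fin.elim0 i)) = (default : Fin 0 → Qt S u W) :=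
      Subsingleton.elim _ _
    have e3 : (fun i : Fin 0 => ((Fin.elim0 i : ↥W) : M)) = (fun i : Fin 0 => i.elim0) :=
      Subsingleton.elim _ _
    rw [e1, e2, e3] at hgood
    exact hgood
  -- the quotient is a model of `T₀ ∪ {φ.not}`
  haveI hmodel : (Qt S u W) ⊨ (↑T₀ ∪ {φ.not} : L.Theory) := by
    rw [Theory.model_iff]
    intro ψ hψ
    rcases hψ with hψ | hψ
    · exact (key ψ (Set.mem_insert_of_mem _ hψ)).2 (u.up hcU (hT₀ ψ hψ))
    · rw [Set.mem_singleton_iff.1 hψ, Sentence.realize_not]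
      intro hreal
      have := (key φ (Set.mem_insert _ _)).1 hreal
      exact u.nmem_of_compl_mem (u.up hcU hφ) this
  intro hmodels
  rw [Theory.models_iff_not_satisfiable] at hmodels
  exact hmodels (Theory.Model.isSatisfiable (Qt S u W))

end Final

end BVStruct

/-- Soundness for Boolean-valued models: if every sentence of a theory `T` has Boolean
value at least `b` in a `B`-valued model `S`, and `φ` is provable from `T` (equivalently,
by Gödel completeness, a semantic consequence of `T`), then `⟦φ⟧ ≥ b` in `S`. -/
theorem bv_soundness {L : FirstOrder.Language} {B M : Type*} [CompleteBooleanAlgebra B]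
    [Nonempty M] (S : BVStruct L B M) (b : B) (T : L.Theory) (φ : L.Sentence)
    (hT : ∀ ψ ∈ T, b ≤ S.sval ψ)
    (hprov : T.ModelsBoundedFormula φ) :
    b ≤ S.sval φ := by
  by_contra hb
  have hc : b ⊓ (S.sval φ)ᶜ ≠ ⊥ := by
    intro h
    apply hb
    rwa [← sdiff_eq, sdiff_eq_bot_iff] at h
  obtain ⟨T₀, hsub, hmodels⟩ := FirstOrder.Language.Theory.models_iff_finset_models.1 hprov
  exact BVStruct.main_lemma S (b ⊓ (S.sval φ)ᶜ) hc T₀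
    (fun ψ h => le_trans inf_le_left (hT ψ (hsub h))) φ inf_le_right hmodels
end

section
/- Łoś theorem for full Boolean-valued models: Let M be a full B-valued model for a language L and G an ultrafilter on B. Then for every L-formula φ(x_1,…,x_n) and τ_1,…,τ_n ∈ M, the quotient structure M/G satisfies φ([τ_1]_G,…,[τ_n]_G) if and only if the Boolean value ⟦φ(τ_1,…,τ_n)⟧ belongs to G. -/
open FirstOrder

namespace BVStruct

variable {L : FirstOrder.Language} {B M : Type*} [CompleteBooleanAlgebra B]

/-- The equivalence `τ ≡_G σ ↔ ⟦τ = σ⟧ ∈ G` used to form the quotient `M/G`. -/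
def bvSetoid (S : BVStruct L B M) (G : BoolUltrafilter B) : Setoid M where
  r τ σ := S.eqv τ σ ∈ G.carrier
  iseqv := by
    refine ⟨fun τ => ?_, fun {τ σ} h => ?_, fun {τ σ χ} h₁ h₂ => ?_⟩
    · rw [S.eqv_refl]; exact G.top_mem
    · rw [S.eqv_symm]; exact h
    · exact G.mem_of_le _ _ (G.inf_mem _ _ h₁ h₂) (S.eqv_trans _ _ _)

/-- The quotient structure `M/G`: relations hold iff their Boolean value (at chosen
representatives) lies in `G`, functions are computed on representatives. -/
noncomputable def quotStruct (S : BVStruct L B M) (G : BoolUltrafilter B) :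
    FirstOrder.Language.Structure L (Quotient (S.bvSetoid G)) where
  funMap := fun {_} F qs => Quotient.mk (S.bvSetoid G) (S.funMap F fun i => (qs i).out)
  RelMap := fun {_} R qs => S.relMap R (fun i => (qs i).out) ∈ G.carrier

/-- A `B`-valued model is full if every existential Boolean value is attained. -/
def IsFull (S : BVStruct L B M) : Prop :=
  ∀ (n : ℕ) (φ : L.BoundedFormula Empty (n + 1)) (xs : Fin n → M),
    ∃ σ : M, S.val φ.ex Empty.elim xs = S.val φ Empty.elim (Fin.snoc xs σ)

end BVStruct

section LosHelpers

open FirstOrder FirstOrder.Language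

variable {L : FirstOrder.Language} {B M : Type*} [CompleteBooleanAlgebra B]

lemma BoolUltrafilter.compl_mem_iff (G : BoolUltrafilter B) (a : B) :
    aᶜ ∈ G.carrier ↔ a ∉ G.carrier := by
  constructor
  · intro hc ha
    exact G.bot_not_mem (by simpa using G.inf_mem a aᶜ ha hc)
  · intro ha
    rcases G.mem_or_compl_mem a with h | h
    · exact absurd h ha
    · exact h

lemma BoolUltrafilter.himp_mem_iff (G : BoolUltrafilter B) (a b : B) :
    a ⇨ b ∈ G.carrier ↔ (a ∈ G.carrier → b ∈ G.carrier) := by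
  constructor
  · intro h ha
    refine G.mem_of_le _ _ (G.inf_mem _ _ ha h) ?_
    rw [inf_himp]; exact inf_le_right
  · intro h
    by_cases ha : a ∈ G.carrier
    · exact G.mem_of_le _ _ (h ha) le_himp
    · exact G.mem_of_le _ _ ((G.compl_mem_iff a).2 ha) compl_le_himp

lemma BoolUltrafilter.finset_inf_mem (G : BoolUltrafilter B) {ι : Type*} (s : Finset ι)
    (f : ι → B) (h : ∀ i ∈ s, f i ∈ G.carrier) : s.inf f ∈ G.carrier := by
  classical
  induction s using Finset.induction_on with
  | empty => simpa using G.top_mem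
  | insert _ _ hx ih =>
    rw [Finset.inf_insert]
    exact G.inf_mem _ _ (h _ (Finset.mem_insert_self _ _))
      (ih fun i hi => h i (Finset.mem_insert_of_mem hi))

lemma BoolUltrafilter.iInf_mem (G : BoolUltrafilter B) {n : ℕ} (f : Fin n → B)
    (h : ∀ i, f i ∈ G.carrier) : (⨅ i, f i) ∈ G.carrier := by
  have : (⨅ i, f i) = Finset.univ.inf f := by
    simp [Finset.inf_eq_iInf]
  rw [this]
  exact G.finset_inf_mem _ _ fun i _ => h i

namespace BVStruct

lemma relMap_mem_congr (S : BVStruct L B M) (G : BoolUltrafilter B) {n : ℕ}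
    (R : L.Relations n) (x y : Fin n → M)
    (h : ∀ i, S.eqv (x i) (y i) ∈ G.carrier) :
    (S.relMap R x ∈ G.carrier ↔ S.relMap R y ∈ G.carrier) := by
  constructor <;> intro hR
  · exact G.mem_of_le _ _
      (G.inf_mem _ _ (G.iInf_mem _ h) hR) (S.rel_congr R x y)
  · refine G.mem_of_le _ _
      (G.inf_mem _ _ (G.iInf_mem (fun i => S.eqv (y i) (x i)) ?_) hR) (S.rel_congr R y x)
    intro i; show S.eqv (y i) (x i) ∈ G.carrier; rw [S.eqv_symm]; exact h i

lemma eqv_funMap_mem (S : BVStruct L B M) (G : BoolUltrafilter B) {n : ℕ}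
    (F : L.Functions n) (x y : Fin n → M)
    (h : ∀ i, S.eqv (x i) (y i) ∈ G.carrier) :
    S.eqv (S.funMap F x) (S.funMap F y) ∈ G.carrier :=
  G.mem_of_le _ _ (G.iInf_mem _ h) (S.fun_congr F x y)

lemma eqv_out_mem (S : BVStruct L B M) (G : BoolUltrafilter B) (a : M) :
    S.eqv (Quotient.mk (S.bvSetoid G) a).out a ∈ G.carrier :=
  @Quotient.mk_out M (S.bvSetoid G) a

lemma snoc_mk (S : BVStruct L B M) (G : BoolUltrafilter B) {n : ℕ} (τ : Fin n → M) (a : M) :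
    (Fin.snoc (fun i => Quotient.mk (S.bvSetoid G) (τ i)) (Quotient.mk (S.bvSetoid G) a)
      : Fin (n + 1) → Quotient (S.bvSetoid G))
      = fun i => Quotient.mk (S.bvSetoid G) ((Fin.snoc τ a : Fin (n + 1) → M) i) := by
  funext i
  refine Fin.lastCases ?_ ?_ i <;> simp

lemma val_all_mem_iff (S : BVStruct L B M) (hfull : S.IsFull) (G : BoolUltrafilter B) {n : ℕ}
    (φ : L.BoundedFormula Empty (n + 1)) (τ : Fin n → M) :
    S.val φ.all Empty.elim τ ∈ G.carrier ↔
      ∀ a : M, S.val φ Empty.elim (Fin.snoc τ a) ∈ G.carrier := by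
  constructor
  · intro h a
    exact G.mem_of_le _ _ h (iInf_le _ a)
  · intro h
    obtain ⟨σ, hσ⟩ := hfull n φ.not τ
    have h1 : ((⨅ a : M, ((S.val φ Empty.elim (Fin.snoc τ a) ⇨ ⊥) ⇨ ⊥)) ⇨ ⊥)
        = (S.val φ Empty.elim (Fin.snoc τ σ) ⇨ ⊥) := hσ
    simp only [himp_bot, compl_compl] at h1
    have h2 : (⨅ a : M, S.val φ Empty.elim (Fin.snoc τ a))
        = S.val φ Empty.elim (Fin.snoc τ σ) := compl_injective h1
    show (⨅ a : M, S.val φ Empty.elim (Fin.snoc τ a)) ∈ G.carrier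
    rw [h2]
    exact h σ

end BVStruct

end LosHelpers

open FirstOrder.Language in
/-- Łoś's theorem for full Boolean-valued models: `M/G ⊨ φ([τ₁]_G,…,[τₙ]_G)` iff
`⟦φ(τ₁,…,τₙ)⟧ ∈ G`. -/
theorem bv_los {L : FirstOrder.Language} {B M : Type*} [CompleteBooleanAlgebra B]
    (S : BVStruct L B M) (hfull : S.IsFull) (G : BoolUltrafilter B)
    (n : ℕ) (φ : L.BoundedFormula Empty n) (τ : Fin n → M) :
    (letI : L.Structure (Quotient (S.bvSetoid G)) := S.quotStruct G;
      φ.Realize Empty.elim (fun i => Quotient.mk (S.bvSetoid G) (τ i))) ↔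
    S.val φ Empty.elim τ ∈ G.carrier := by
  letI inst : L.Structure (Quotient (S.bvSetoid G)) := S.quotStruct G
  show φ.Realize Empty.elim (fun i => Quotient.mk (S.bvSetoid G) (τ i)) ↔ _
  have hterm : ∀ {m : ℕ} (v : Empty ⊕ Fin m → M) (t : L.Term (Empty ⊕ Fin m)),
      Term.realize (M := Quotient (S.bvSetoid G))
          (fun a => Quotient.mk (S.bvSetoid G) (v a)) t
        = Quotient.mk (S.bvSetoid G) (S.realizeTerm v t) := by
    intro m v t
    induction t with
    | var a => rfl
    | func F ts ih =>
      show Quotient.mk (S.bvSetoid G)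
          (S.funMap F fun i =>
            (Term.realize (M := Quotient (S.bvSetoid G))
              (fun a => Quotient.mk (S.bvSetoid G) (v a)) (ts i)).out) = _
      refine Quotient.sound ?_
      refine S.eqv_funMap_mem G F _ _ fun i => ?_
      rw [ih i]
      exact S.eqv_out_mem G _
  induction φ with
  | falsum => exact iff_of_false (fun h => h) G.bot_not_mem
  | equal t₁ t₂ =>
    have hv : (Sum.elim Empty.elim (fun i => Quotient.mk (S.bvSetoid G) (τ i))
        : Empty ⊕ Fin _ → Quotient (S.bvSetoid G))
        = fun a => Quotient.mk (S.bvSetoid G) (Sum.elim Empty.elim τ a) := by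
      funext a; cases a with | inl e => exact e.elim | inr i => rfl
    show (Term.realize (Sum.elim Empty.elim fun i => Quotient.mk (S.bvSetoid G) (τ i)) t₁
        = Term.realize (Sum.elim Empty.elim fun i => Quotient.mk (S.bvSetoid G) (τ i)) t₂) ↔ _
    rw [hv, hterm, hterm, Quotient.eq]
    exact Iff.rfl
  | rel R ts =>
    have hv : (Sum.elim Empty.elim (fun i => Quotient.mk (S.bvSetoid G) (τ i))
        : Empty ⊕ Fin _ → Quotient (S.bvSetoid G))
        = fun a => Quotient.mk (S.bvSetoid G) (Sum.elim Empty.elim τ a) := by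
      funext a; cases a with | inl e => exact e.elim | inr i => rfl
    show (S.relMap R fun i =>
        (Term.realize (Sum.elim Empty.elim fun i => Quotient.mk (S.bvSetoid G) (τ i))
          (ts i)).out) ∈ G.carrier ↔ _
    rw [hv]
    simp only [hterm]
    exact S.relMap_mem_congr G R _ _ fun i => S.eqv_out_mem G _
  | imp φ ψ ih₁ ih₂ =>
    show ((φ.Realize _ _) → (ψ.Realize _ _)) ↔ _
    rw [show S.val (φ.imp ψ) Empty.elim τ
      = S.val φ Empty.elim τ ⇨ S.val ψ Empty.elim τ from rfl, G.himp_mem_iff]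
    exact imp_congr (ih₁ τ) (ih₂ τ)
  | all φ ih =>
    rw [S.val_all_mem_iff hfull G φ τ]
    constructor
    · intro h a
      have := h (Quotient.mk (S.bvSetoid G) a)
      rw [S.snoc_mk G τ a] at this
      exact (ih (Fin.snoc τ a)).1 this
    · intro h q
      have := (ih (Fin.snoc τ q.out)).2 (h q.out)
      rw [← S.snoc_mk G τ q.out, Quotient.out_eq] at this
      exact this
end

section
/- Let M be a full B-valued model, φ(x̄) a formula, τ̄ parameters, and a ∈ B. The following are equivalent: (a) ⟦φ(τ̄)⟧ ≥ a; (b) M/G ⊨ φ([τ̄]_G) for all ultrafilters G containing a; (c) the set of ultrafilters G containing a with M/G ⊨ φ([τ̄]_G) is dense in the clopen set O_a of the Stone space. -/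
open FirstOrder

/-- Satisfaction of `φ([τ]_G)` in the quotient `M/G`. -/
def satAt {L : FirstOrder.Language} {B M : Type*} [CompleteBooleanAlgebra B]
    (S : BVStruct L B M) (G : BoolUltrafilter B) {n : ℕ}
    (φ : L.BoundedFormula Empty n) (τ : Fin n → M) : Prop :=
  letI : FirstOrder.Language.Structure L (Quotient (S.bvSetoid G)) := S.quotStruct G;
  φ.Realize Empty.elim (fun i => Quotient.mk (S.bvSetoid G) (τ i))

section Aux

open FirstOrder

namespace BoolUltrafilter

variable {B : Type*} [BooleanAlgebra B] (G : BoolUltrafilter B)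

lemma compl_mem_iff_s16 (a : B) : aᶜ ∈ G.carrier ↔ a ∉ G.carrier := by
  constructor
  · intro h ha
    exact G.bot_not_mem (by simpa using G.inf_mem a aᶜ ha h)
  · intro h
    rcases G.mem_or_compl_mem a with h' | h'
    · exact absurd h' h
    · exact h'

lemma sup_mem_iff (a b : B) : a ⊔ b ∈ G.carrier ↔ a ∈ G.carrier ∨ b ∈ G.carrier := by
  constructor
  · intro h
    by_contra hc
    push_neg at hc
    have ha := (G.compl_mem_iff_s16 a).2 hc.1
    have hb := (G.compl_mem_iff_s16 b).2 hc.2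
    have h2 : (a ⊔ b)ᶜ ∈ G.carrier := by rw [compl_sup]; exact G.inf_mem _ _ ha hb
    have h3 := G.inf_mem _ _ h h2
    rw [inf_compl_eq_bot] at h3
    exact G.bot_not_mem h3
  · rintro (h | h)
    · exact G.mem_of_le _ _ h le_sup_left
    · exact G.mem_of_le _ _ h le_sup_right

lemma himp_mem_iff_s16 (a b : B) : a ⇨ b ∈ G.carrier ↔ (a ∈ G.carrier → b ∈ G.carrier) := by
  rw [himp_eq, G.sup_mem_iff, G.compl_mem_iff_s16]
  tauto

lemma iInf_mem_s16 {B : Type*} [CompleteBooleanAlgebra B] (G : BoolUltrafilter B) {n : ℕ}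
    (f : Fin n → B) (h : ∀ i, f i ∈ G.carrier) : (⨅ i, f i) ∈ G.carrier := by
  rw [← Finset.inf_univ_eq_iInf]
  exact Finset.inf_mem G.carrier G.top_mem (fun x hx y hy => G.inf_mem x y hx hy) _ _
    (fun i _ => h i)

lemma exists_mem_of_ne_bot {B : Type*} [BooleanAlgebra B] {b : B} (hb : b ≠ ⊥) :
    ∃ G : BoolUltrafilter B, b ∈ G.carrier := by
  set P : Set (Set B) :=
    {F | b ∈ F ∧ ⊥ ∉ F ∧ (∀ x ∈ F, ∀ y ∈ F, x ⊓ y ∈ F) ∧ ∀ x ∈ F, ∀ y, x ≤ y → y ∈ F}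
    with hP
  have h0 : {c | b ≤ c} ∈ P :=
    ⟨le_refl b, fun h => hb (le_bot_iff.1 h), fun x hx y hy => le_inf hx hy,
      fun x hx y hxy => hx.trans hxy⟩
  have hzorn : ∀ c ⊆ P, IsChain (· ⊆ ·) c → c.Nonempty →
      ∃ ub ∈ P, ∀ s ∈ c, s ⊆ ub := by
    intro c hcP hchain hcne
    refine ⟨⋃₀ c, ⟨?_, ?_, ?_, ?_⟩, fun s hs => Set.subset_sUnion_of_mem hs⟩
    · obtain ⟨s, hs⟩ := hcne
      exact ⟨s, hs, (hcP hs).1⟩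
    · rintro ⟨s, hs, hbot⟩
      exact (hcP hs).2.1 hbot
    · rintro x ⟨s, hs, hx⟩ y ⟨t, ht, hy⟩
      rcases hchain.total hs ht with hst | hts
      · exact ⟨t, ht, (hcP ht).2.2.1 x (hst hx) y hy⟩
      · exact ⟨s, hs, (hcP hs).2.2.1 x hx y (hts hy)⟩
    · rintro x ⟨s, hs, hx⟩ y hxy
      exact ⟨s, hs, (hcP hs).2.2.2 x hx y hxy⟩
  obtain ⟨F, hbF, hFmax⟩ := zorn_subset_nonempty P hzorn _ h0
  · obtain ⟨hbmem, hbot, hinf, hup⟩ := hFmax.1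
    -- maximal proper filters are ultrafilters
    have hkey : ∀ c : B, c ∈ F ∨ cᶜ ∈ F := by
      intro c
      by_cases hc : ∃ f ∈ F, f ⊓ c = ⊥
      · obtain ⟨f, hf, hfc⟩ := hc
        right
        exact hup f hf cᶜ (le_compl_iff_disjoint_right.2 (disjoint_iff.2 hfc))
      · push_neg at hc
        left
        set F' : Set B := {x | ∃ f ∈ F, f ⊓ c ≤ x} with hF'
        have hF'P : F' ∈ P := by
          refine ⟨⟨b, hbmem, inf_le_left.trans le_rfl⟩, ?_, ?_, ?_⟩
          · rintro ⟨f, hf, hfle⟩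
            exact hc f hf (le_bot_iff.1 hfle)
          · rintro x ⟨f, hf, hfx⟩ y ⟨g, hg, hgy⟩
            exact ⟨f ⊓ g, hinf f hf g hg,
              le_inf ((inf_le_inf_right c inf_le_left).trans hfx)
                ((inf_le_inf_right c inf_le_right).trans hgy)⟩
          · rintro x ⟨f, hf, hfx⟩ y hxy
            exact ⟨f, hf, hfx.trans hxy⟩
        have hsub : F ⊆ F' := fun x hx => ⟨x, hx, inf_le_left⟩
        have : F' ⊆ F := hFmax.2 hF'P hsub
        exact this ⟨b, hbmem, inf_le_right⟩
    exact ⟨⟨F, hup b hbmem ⊤ le_top, hbot, fun x y hx hy => hinf x hx y hy,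
      fun x y hx hxy => hup x hx y hxy, hkey⟩, hbmem⟩

end BoolUltrafilter

namespace BVStruct

variable {L : Language} {B M : Type*} [CompleteBooleanAlgebra B]

lemma eqv_out (S : BVStruct L B M) (G : BoolUltrafilter B) (x : M) :
    S.eqv ((Quotient.mk (S.bvSetoid G) x).out) x ∈ G.carrier :=
  Quotient.mk_out (s := S.bvSetoid G) x

lemma rel_mem_congr (S : BVStruct L B M) (G : BoolUltrafilter B) {m : ℕ}
    (R : L.Relations m) (x y : Fin m → M)
    (h : ∀ i, S.eqv (x i) (y i) ∈ G.carrier) :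
    S.relMap R x ∈ G.carrier → S.relMap R y ∈ G.carrier := fun hx =>
  G.mem_of_le _ _ (G.inf_mem _ _ (G.iInf_mem_s16 _ h) hx) (S.rel_congr R x y)

lemma realizeTerm_quot (S : BVStruct L B M) (G : BoolUltrafilter B) {α : Type*}
    (v : α → M) (t : L.Term α) :
    letI := S.quotStruct G
    t.realize (fun a => Quotient.mk (S.bvSetoid G) (v a))
      = Quotient.mk (S.bvSetoid G) (S.realizeTerm v t) := by
  letI := S.quotStruct G
  induction t with
  | var a => rfl
  | func F ts ih =>
    show Language.Structure.funMap F
        (fun i => (ts i).realize (fun a => Quotient.mk (S.bvSetoid G) (v a))) = _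
    rw [show (fun i => (ts i).realize (fun a => Quotient.mk (S.bvSetoid G) (v a)))
        = fun i => Quotient.mk (S.bvSetoid G) (S.realizeTerm v (ts i)) from funext ih]
    refine Quotient.sound ?_
    show S.eqv _ _ ∈ G.carrier
    exact G.mem_of_le _ _ (G.iInf_mem_s16 _ fun i => S.eqv_out G _) (S.fun_congr F _ _)

lemma val_not (S : BVStruct L B M) {α : Type*} {k : ℕ} (ψ : L.BoundedFormula α k)
    (v : α → M) (xs : Fin k → M) :
    S.val ψ.not v xs = (S.val ψ v xs)ᶜ := by
  show S.val ψ v xs ⇨ ⊥ = _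
  rw [himp_bot]

lemma sum_elim_empty (S : BVStruct L B M) (G : BoolUltrafilter B) {k : ℕ} (f : Fin k → M) :
    (Sum.elim (Empty.elim : Empty → Quotient (S.bvSetoid G))
        (fun i => Quotient.mk (S.bvSetoid G) (f i)))
      = fun s => Quotient.mk (S.bvSetoid G) (Sum.elim Empty.elim f s) := by
  funext s
  rcases s with e | i
  · exact e.elim
  · rfl

lemma los (S : BVStruct L B M) (hfull : S.IsFull) (G : BoolUltrafilter B) :
    ∀ {k : ℕ} (φ : L.BoundedFormula Empty k) (xs : Fin k → M),
      satAt S G φ xs ↔ S.val φ Empty.elim xs ∈ G.carrier := by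
  intro k φ
  induction φ with
  | falsum =>
    intro xs
    letI := S.quotStruct G
    simp only [satAt, BVStruct.val]
    exact ⟨fun h => h.elim, fun h => absurd h G.bot_not_mem⟩
  | equal t₁ t₂ =>
    intro xs
    letI := S.quotStruct G
    simp only [satAt]
    show Language.Term.realize _ t₁ = Language.Term.realize _ t₂ ↔ _
    rw [S.sum_elim_empty G xs]
    rw [S.realizeTerm_quot G (Sum.elim Empty.elim xs) t₁,
      S.realizeTerm_quot G (Sum.elim Empty.elim xs) t₂]
    exact Quotient.eq
  | rel R ts =>
    intro xs
    letI := S.quotStruct G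
    simp only [satAt]
    show Language.Structure.RelMap R
        (fun i => Language.Term.realize _ (ts i)) ↔ _
    rw [S.sum_elim_empty G xs]
    show S.relMap R (fun i => (Language.Term.realize
        (fun s => Quotient.mk (S.bvSetoid G) (Sum.elim Empty.elim xs s)) (ts i)).out)
        ∈ G.carrier ↔ _
    have hterm : ∀ i, Language.Term.realize
        (fun s => Quotient.mk (S.bvSetoid G) (Sum.elim Empty.elim xs s)) (ts i)
        = Quotient.mk (S.bvSetoid G) (S.realizeTerm (Sum.elim Empty.elim xs) (ts i)) :=
      fun i => S.realizeTerm_quot G _ (ts i)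
    simp only [hterm]
    constructor
    · exact S.rel_mem_congr G R _ _ (fun i => S.eqv_out G _)
    · refine S.rel_mem_congr G R _ _ (fun i => ?_)
      rw [S.eqv_symm]
      exact S.eqv_out G _
  | imp φ ψ ih₁ ih₂ =>
    intro xs
    letI := S.quotStruct G
    simp only [satAt] at ih₁ ih₂ ⊢
    rw [Language.BoundedFormula.realize_imp, ih₁, ih₂]
    show _ ↔ (S.val φ Empty.elim xs ⇨ S.val ψ Empty.elim xs) ∈ G.carrier
    rw [G.himp_mem_iff_s16]
  | all φ ih =>
    intro xs
    letI := S.quotStruct G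
    simp only [satAt] at ih ⊢
    rw [Language.BoundedFormula.realize_all]
    show _ ↔ (⨅ σ : M, S.val φ Empty.elim (Fin.snoc xs σ)) ∈ G.carrier
    constructor
    · intro h
      obtain ⟨σ, hσ⟩ := hfull _ φ.not xs
      have h1 : S.val φ.not.ex Empty.elim xs
          = (⨅ σ : M, S.val φ Empty.elim (Fin.snoc xs σ))ᶜ := by
        show S.val φ.not.not.all.not Empty.elim xs = _
        rw [S.val_not]
        congr 1
        show (⨅ σ : M, S.val φ.not.not Empty.elim (Fin.snoc xs σ)) = _
        refine iInf_congr fun σ => ?_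
        rw [S.val_not, S.val_not, compl_compl]
      rw [h1, S.val_not] at hσ
      have key : (⨅ σ : M, S.val φ Empty.elim (Fin.snoc xs σ))
          = S.val φ Empty.elim (Fin.snoc xs σ) := compl_injective hσ
      rw [key, ← ih (Fin.snoc xs σ)]
      have hc : (fun i => Quotient.mk (S.bvSetoid G) ((Fin.snoc xs σ : Fin _ → M) i))
          = Fin.snoc (fun i => Quotient.mk (S.bvSetoid G) (xs i))
            (Quotient.mk (S.bvSetoid G) σ) := by
        funext i
        exact congrFun (Fin.comp_snoc (Quotient.mk (S.bvSetoid G)) xs σ) i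
      have := h (Quotient.mk (S.bvSetoid G) σ)
      rwa [← hc] at this
    · intro h q
      refine Quotient.inductionOn q fun σ => ?_
      have hm : S.val φ Empty.elim (Fin.snoc xs σ) ∈ G.carrier :=
        G.mem_of_le _ _ h (iInf_le _ σ)
      have hc : (fun i => Quotient.mk (S.bvSetoid G) ((Fin.snoc xs σ : Fin _ → M) i))
          = Fin.snoc (fun i => Quotient.mk (S.bvSetoid G) (xs i))
            (Quotient.mk (S.bvSetoid G) σ) := by
        funext i
        exact congrFun (Fin.comp_snoc (Quotient.mk (S.bvSetoid G)) xs σ) i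
      have := (ih (Fin.snoc xs σ)).2 hm
      rwa [hc] at this

end BVStruct

lemma isOpen_basicOpen {B : Type*} [BooleanAlgebra B] (b : B) :
    IsOpen (basicOpen b) :=
  TopologicalSpace.GenerateOpen.basic _ ⟨b, rfl⟩

end Aux
/-- For a full `B`-valued model `S`, a formula `φ`, parameters `τ` and `a ∈ B`, the
following are equivalent: (a) `⟦φ(τ)⟧ ≥ a`; (b) `M/G ⊨ φ([τ]_G)` for every ultrafilter
`G` containing `a`; (c) the set of such `G` satisfying `φ` is (topologically) dense in
the clopen set `O_a` of the Stone space of `B`. -/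
theorem bv_value_ge_iff_forall_iff_dense
    {L : FirstOrder.Language} {B M : Type*} [CompleteBooleanAlgebra B]
    (S : BVStruct L B M) (hfull : S.IsFull) (a : B)
    (n : ℕ) (φ : L.BoundedFormula Empty n) (τ : Fin n → M) :
    (a ≤ S.val φ Empty.elim τ ↔
      ∀ G : BoolUltrafilter B, a ∈ G.carrier → satAt S G φ τ) ∧
    ((∀ G : BoolUltrafilter B, a ∈ G.carrier → satAt S G φ τ) ↔
      basicOpen a ⊆ closure {G : BoolUltrafilter B | a ∈ G.carrier ∧ satAt S G φ τ}) := by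
  have los := S.los hfull
  have part1 : a ≤ S.val φ Empty.elim τ ↔
      ∀ G : BoolUltrafilter B, a ∈ G.carrier → satAt S G φ τ := by
    constructor
    · intro h G hG
      exact (los G φ τ).2 (G.mem_of_le _ _ hG h)
    · intro h
      by_contra hle
      have hne : a ⊓ (S.val φ Empty.elim τ)ᶜ ≠ ⊥ := by
        intro hbot
        exact hle (by rwa [← sdiff_eq, sdiff_eq_bot_iff] at hbot)
      obtain ⟨G, hG⟩ := BoolUltrafilter.exists_mem_of_ne_bot hne
      have haG : a ∈ G.carrier := G.mem_of_le _ _ hG inf_le_left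
      have hcG : (S.val φ Empty.elim τ)ᶜ ∈ G.carrier := G.mem_of_le _ _ hG inf_le_right
      have hvG : S.val φ Empty.elim τ ∈ G.carrier := (los G φ τ).1 (h G haG)
      exact (G.compl_mem_iff_s16 _).1 hcG hvG
  refine ⟨part1, ?_, ?_⟩
  · intro h G hG
    exact subset_closure ⟨hG, h G hG⟩
  · intro hdense G hG
    rw [los G φ τ]
    by_contra hv
    have hcG : (S.val φ Empty.elim τ)ᶜ ∈ G.carrier := (G.compl_mem_iff_s16 _).2 hv
    have hGmem : G ∈ basicOpen (a ⊓ (S.val φ Empty.elim τ)ᶜ) := G.inf_mem _ _ hG hcG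
    have hclo := hdense hG
    rw [mem_closure_iff] at hclo
    obtain ⟨G', hG'o, haG', hsG'⟩ := hclo _ (isOpen_basicOpen _) hGmem
    have hvG' : S.val φ Empty.elim τ ∈ G'.carrier := (los G' φ τ).1 hsG'
    exact (G'.compl_mem_iff_s16 _).1 (G'.mem_of_le _ _ hG'o inf_le_right) hvG'
end

section
/- Let X be compact Hausdorff extremally disconnected, Y a Polish space with a fixed Polish compactification H (e.g. the Hilbert cube), and f : X → H continuous with f⁻¹[H \ Y] meager. For H an ultrafilter point of X with f(H) ∈ Y, the singleton {f(H)} equals Y ∩ ⋂{Cl(U_n) : Int(Cl(f⁻¹[U_n])) ∈ H}, where {U_n} is a fixed countable basis of Y; moreover the intersection ⋂{Cl(U_n) : Int(Cl(f⁻¹[U_n])) ∈ H} is always nonempty. -/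
/-- Let `X` be compact Hausdorff extremally disconnected, `H` a Polish compactification
of a Polish subspace `Y ⊆ H` with countable basis `{U n}`, and `f : X → H` continuous
with `f⁻¹[H \ Y]` meager. Then for every point `p` of `X` (viewed as an ultrafilter of
clopen sets, so that `Int(Cl(f⁻¹[U n])) ∈ p` means `p ∈ Int(Cl(f⁻¹[U n]))`), the set
`⋂ {Cl(U n) : p ∈ Int(Cl(f⁻¹[U n]))}` is nonempty, and if `f p ∈ Y` then its
intersection with `Y` is exactly `{f p}`. -/
theorem value_from_ultrafilter_of_clopens
    {X H : Type*} [TopologicalSpace X] [CompactSpace X] [T2Space X]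
    [ExtremallyDisconnected X]
    [TopologicalSpace H] [CompactSpace H] [T2Space H] [PolishSpace H]
    (Y : Set H) (hPolY : PolishSpace Y)
    (U : ℕ → Set H) (hUY : ∀ n, U n ⊆ Y)
    (hUopen : ∀ n, ∃ V : Set H, IsOpen V ∧ U n = V ∩ Y)
    (hbasis : ∀ y ∈ Y, ∀ V : Set H, IsOpen V → y ∈ V → ∃ n, y ∈ U n ∧ U n ⊆ V)
    (f : X → H) (hf : Continuous f) (hmeager : IsMeagre (f ⁻¹' Yᶜ)) :
    (∀ p : X,
      (⋂ n ∈ {n : ℕ | p ∈ interior (closure (f ⁻¹' U n))}, closure (U n)).Nonempty) ∧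
    (∀ p : X, f p ∈ Y →
      Y ∩ ⋂ n ∈ {n : ℕ | p ∈ interior (closure (f ⁻¹' U n))}, closure (U n) = {f p}) := by
  -- f p lies in every closure (U n) with p ∈ interior (closure (f⁻¹' U n))
  have hmem : ∀ p : X, f p ∈ ⋂ n ∈ {n : ℕ | p ∈ interior (closure (f ⁻¹' U n))},
      closure (U n) := by
    intro p
    simp only [Set.mem_iInter, Set.mem_setOf_eq]
    intro n hn
    have h1 : p ∈ closure (f ⁻¹' U n) := interior_subset hn
    have h2 : closure (f ⁻¹' U n) ⊆ f ⁻¹' closure (U n) :=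
      hf.closure_preimage_subset _
    exact h2 h1
  refine ⟨fun p => ⟨f p, hmem p⟩, fun p hpY => ?_⟩
  apply Set.eq_singleton_iff_unique_mem.mpr
  refine ⟨⟨hpY, hmem p⟩, ?_⟩
  rintro y ⟨hyY, hy⟩
  by_contra hne
  -- separate f p from y by a closed neighborhood
  obtain ⟨C, hC, hCcl, hCsub⟩ := exists_mem_nhds_isClosed_subset
    (show ({y}ᶜ : Set H) ∈ nhds (f p) from
      (isOpen_compl_singleton).mem_nhds (by simpa [eq_comm] using hne))
  obtain ⟨n, hn1, hn2⟩ := hbasis (f p) hpY (interior C) isOpen_interior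
    (mem_interior_iff_mem_nhds.mpr hC)
  -- y ∉ closure (U n)
  have hyn : y ∉ closure (U n) := by
    intro h
    have : closure (U n) ⊆ C := by
      calc closure (U n) ⊆ closure (interior C) := closure_mono hn2
        _ ⊆ C := by simpa using closure_mono interior_subset |>.trans (hCcl.closure_subset : closure C ⊆ C)
    exact hCsub (this h) rfl
  -- p ∈ interior (closure (f⁻¹' U n))
  obtain ⟨V, hVopen, hVeq⟩ := hUopen n
  have hpV : p ∈ f ⁻¹' V := by
    have := hn1; rw [hVeq] at this; exact this.1
  have hdense : Dense (f ⁻¹' Yᶜ)ᶜ := dense_of_mem_residual hmeager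
  have hsub : f ⁻¹' V ⊆ closure (f ⁻¹' U n) := by
    have h1 : f ⁻¹' V ⊆ closure (f ⁻¹' V ∩ (f ⁻¹' Yᶜ)ᶜ) :=
      hdense.open_subset_closure_inter (hVopen.preimage hf)
    refine h1.trans (closure_mono ?_)
    rintro x ⟨hxV, hxY⟩
    have hxY' : f x ∈ Y := by simpa using hxY
    rw [Set.mem_preimage, hVeq]; exact ⟨hxV, hxY'⟩
  have hpint : p ∈ interior (closure (f ⁻¹' U n)) :=
    interior_maximal hsub (hVopen.preimage hf) hpV
  have := Set.mem_iInter.mp hy n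
  exact hyn (Set.mem_iInter.mp (this) hpint)
end
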